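/- arXiv:math/0107043 — 7 statements merged into one kernel-verified Lean document; each statement's English description precedes it below -/
import Mathlib

section
/- Let x and y be two points on the unit circle in ℂ and let Q_n be defined by Q_0 = Q_1 = 1 and Q_{n+1}(z) = Q_n(z) + z^{n+1} Q_{n-1}(z). Then for all integers n ≥ 0, |Q_n(x) - Q_n(y)| ≤ n² φ^n |x - y|, where φ = (1+√5)/2. -/
noncomputable def phi : ℝ := (1 + Real.sqrt 5) / 2

lemma one_le_phi : 1 ≤ phi := by
  have h : (1:ℝ) ≤ Real.sqrt 5 := by
    rw [show (1:ℝ) = Real.sqrt 1 by simp]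
    exact Real.sqrt_le_sqrt (by norm_num)
  unfold phi; linarith

lemma phi_sq : phi ^ 2 = phi + 1 := by
  have h5 : Real.sqrt 5 ^ 2 = 5 := Real.sq_sqrt (by norm_num)
  unfold phi; nlinarith [h5]

lemma pow_sub_pow_bound (x y : ℂ) (hx : ‖x‖ = 1) (hy : ‖y‖ = 1) :
    ∀ n : ℕ, ‖x ^ n - y ^ n‖ ≤ n * ‖x - y‖ := by
  intro n
  induction n with
  | zero => simp
  | succ k ih =>
    have key : x ^ (k+1) - y ^ (k+1) = x ^ k * (x - y) + (x ^ k - y ^ k) * y := by ring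
    calc ‖x ^ (k+1) - y ^ (k+1)‖
        ≤ ‖x ^ k * (x - y)‖ + ‖(x ^ k - y ^ k) * y‖ := by
          rw [key]; exact norm_add_le _ _
      _ = ‖x - y‖ + ‖x ^ k - y ^ k‖ := by
          rw [norm_mul, norm_mul, norm_pow, hx, hy]; ring
      _ ≤ ‖x - y‖ + k * ‖x - y‖ := by linarith
      _ = (k+1 : ℕ) * ‖x - y‖ := by push_cast; ring

lemma Qbound (x : ℂ) (hx : ‖x‖ = 1) (Q : ℕ → ℂ)
    (hQ0 : Q 0 = 1) (hQ1 : Q 1 = 1)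
    (hQrec : ∀ n : ℕ, Q (n + 2) = Q (n + 1) + x ^ (n + 2) * Q n) :
    ∀ n : ℕ, ‖Q n‖ ≤ phi ^ n := by
  have key : ∀ n : ℕ, ‖Q n‖ ≤ phi ^ n ∧ ‖Q (n+1)‖ ≤ phi ^ (n+1) := by
    intro n
    induction n with
    | zero =>
      constructor
      · simp [hQ0]
      · simp [hQ1]; exact one_le_phi
    | succ k ih =>
      refine ⟨ih.2, ?_⟩
      have hp : (0:ℝ) < phi ^ k := pow_pos (by linarith [one_le_phi]) k
      calc ‖Q (k+2)‖ ≤ ‖Q (k+1)‖ + ‖x ^ (k+2) * Q k‖ := by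
            rw [hQrec k]; exact norm_add_le _ _
        _ = ‖Q (k+1)‖ + ‖Q k‖ := by rw [norm_mul, norm_pow, hx]; simp
        _ ≤ phi ^ (k+1) + phi ^ k := by linarith [ih.1, ih.2]
        _ = phi ^ k * (phi + 1) := by ring
        _ = phi ^ k * phi ^ 2 := by rw [phi_sq]
        _ = phi ^ (k+2) := by ring
  exact fun n => (key n).1

/-- For `x, y` on the unit circle, `|Q_n(x) - Q_n(y)| ≤ n² φ^n |x - y|`. -/
theorem stmt3 (x y : ℂ) (hx : ‖x‖ = 1) (hy : ‖y‖ = 1)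
    (Qx Qy : ℕ → ℂ)
    (hQx0 : Qx 0 = 1) (hQx1 : Qx 1 = 1)
    (hQxrec : ∀ n : ℕ, Qx (n + 2) = Qx (n + 1) + x ^ (n + 2) * Qx n)
    (hQy0 : Qy 0 = 1) (hQy1 : Qy 1 = 1)
    (hQyrec : ∀ n : ℕ, Qy (n + 2) = Qy (n + 1) + y ^ (n + 2) * Qy n) :
    ∀ n : ℕ, ‖Qx n - Qy n‖ ≤
      (n : ℝ) ^ 2 * phi ^ n * ‖x - y‖ := by
  have hQy := Qbound y hy Qy hQy0 hQy1 hQyrec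
  have hphi : (1:ℝ) ≤ phi := one_le_phi
  have habs : (0:ℝ) ≤ ‖x - y‖ := norm_nonneg _
  have key : ∀ n : ℕ, ‖Qx n - Qy n‖ ≤ (n : ℝ) ^ 2 * phi ^ n * ‖x - y‖ ∧
      ‖Qx (n+1) - Qy (n+1)‖ ≤ ((n:ℝ)+1) ^ 2 * phi ^ (n+1) * ‖x - y‖ := by
    intro n
    induction n with
    | zero =>
      constructor
      · simp [hQx0, hQy0]
      · simp [hQx1, hQy1]; positivity
    | succ k ih =>
      have hpk : (0:ℝ) < phi ^ k := pow_pos (by linarith) k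
      refine ⟨by push_cast; exact_mod_cast ih.2, ?_⟩
      have hdecomp : Qx (k+2) - Qy (k+2) =
          (Qx (k+1) - Qy (k+1)) + x ^ (k+2) * (Qx k - Qy k) + (x ^ (k+2) - y ^ (k+2)) * Qy k := by
        rw [hQxrec k, hQyrec k]; ring
      have h1 := ih.1
      have h2 := ih.2
      have h3 : ‖(x ^ (k+2) - y ^ (k+2)) * Qy k‖ ≤
          ((k:ℝ)+2) * ‖x - y‖ * phi ^ k := by
        rw [norm_mul]
        have b1 := pow_sub_pow_bound x y hx hy (k+2)
        have b2 := hQy k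
        have := mul_le_mul b1 b2 (norm_nonneg _) (by positivity)
        push_cast at this ⊢
        linarith
      calc ‖Qx (k+2) - Qy (k+2)‖
          ≤ ‖Qx (k+1) - Qy (k+1)‖ + ‖x ^ (k+2) * (Qx k - Qy k)‖
            + ‖(x ^ (k+2) - y ^ (k+2)) * Qy k‖ := by
            rw [hdecomp]
            exact le_trans (norm_add_le _ _)
              (by linarith [norm_add_le ((Qx (k+1) - Qy (k+1))) (x ^ (k+2) * (Qx k - Qy k))])
        _ = ‖Qx (k+1) - Qy (k+1)‖ + ‖Qx k - Qy k‖
            + ‖(x ^ (k+2) - y ^ (k+2)) * Qy k‖ := by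
            rw [norm_mul, norm_pow, hx]; simp
        _ ≤ ((k:ℝ)+1) ^ 2 * phi ^ (k+1) * ‖x - y‖
            + (k:ℝ) ^ 2 * phi ^ k * ‖x - y‖
            + ((k:ℝ)+2) * ‖x - y‖ * phi ^ k := by linarith
        _ ≤ ((k:ℝ)+2) ^ 2 * phi ^ (k+2) * ‖x - y‖ := by
            have hexp1 : phi ^ (k+1) = phi ^ k * phi := by ring
            have hexp2 : phi ^ (k+2) = phi ^ k * (phi + 1) := by
              rw [show phi ^ (k+2) = phi ^ k * phi ^ 2 by ring, phi_sq]
            rw [hexp1, hexp2]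
            nlinarith [mul_nonneg hpk.le habs, mul_nonneg (mul_nonneg hpk.le habs) (by linarith : (0:ℝ) ≤ phi),
              sq_nonneg ((k:ℝ)+1)]
        _ = (((k+1:ℕ):ℝ)+1) ^ 2 * phi ^ (k+1+1) * ‖x - y‖ := by push_cast; ring
  exact fun n => (key n).1
end

section
/- Let x and y be two points on the unit circle in ℂ and let P_n be defined by P_0 = 1, P_1 = 1 + x, and P_{n+1}(z) = P_n(z) + z^{n+1} P_{n-1}(z). Then for all integers n ≥ 0, |P_n(x) - P_n(y)| ≤ (n+1)² φ^{n+1} |x - y|, where φ = (1+√5)/2. -/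
lemma phi_pos : 0 < phi := by
  have h5 : (0:ℝ) ≤ Real.sqrt 5 := Real.sqrt_nonneg 5
  unfold phi; linarith

lemma P_bound (y : ℂ) (hy : ‖y‖ = 1) (Py : ℕ → ℂ)
    (h0 : Py 0 = 1) (h1 : Py 1 = 1 + y)
    (hrec : ∀ n, Py (n+2) = Py (n+1) + y^(n+2) * Py n) :
    ∀ n, ‖Py n‖ ≤ phi ^ (n+1) := by
  have key : ∀ n, ‖Py n‖ ≤ phi ^ (n+1) ∧
      ‖Py (n+1)‖ ≤ phi ^ (n+2) := by
    intro n
    induction n with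
    | zero =>
      constructor
      · rw [h0]; simpa using one_le_phi
      · rw [h1]
        have hle : ‖1 + y‖ ≤ 2 := by
          calc ‖1+y‖ ≤ ‖1‖ + ‖y‖ := norm_add_le _ _
            _ = 2 := by simp [hy]; norm_num
        have h2 : (2:ℝ) ≤ phi ^ 2 := by rw [phi_sq]; linarith [one_le_phi]
        simpa using hle.trans h2
    | succ n ih =>
      refine ⟨ih.2, ?_⟩
      have : ‖Py (n+2)‖ ≤ phi ^ (n+2) + phi ^ (n+1) := by
        rw [hrec n]
        calc ‖Py (n+1) + y^(n+2) * Py n‖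
            ≤ ‖Py (n+1)‖ + ‖y^(n+2) * Py n‖ :=
              norm_add_le _ _
          _ = ‖Py (n+1)‖ + ‖Py n‖ := by
              simp [norm_mul, norm_pow, hy]
          _ ≤ phi ^ (n+2) + phi ^ (n+1) := add_le_add ih.2 ih.1
      have heq : phi ^ (n+2) + phi ^ (n+1) = phi ^ (n+3) := by
        have : phi ^ (n+3) = phi ^ (n+1) * phi ^ 2 := by ring
        rw [this, phi_sq]; ring
      rw [← heq]
      convert this using 2
  intro n; exact (key n).1

lemma pow_diff_bound (x y : ℂ) (hx : ‖x‖ = 1) (hy : ‖y‖ = 1) (k : ℕ) :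
    ‖x ^ k - y ^ k‖ ≤ k * ‖x - y‖ := by
  have hsum : ‖∑ i ∈ Finset.range k, x ^ i * y ^ (k - 1 - i)‖ ≤ k := by
    calc ‖∑ i ∈ Finset.range k, x ^ i * y ^ (k - 1 - i)‖
        ≤ ∑ i ∈ Finset.range k, ‖x ^ i * y ^ (k-1-i)‖ :=
          norm_sum_le _ _
      _ = ∑ _i ∈ Finset.range k, (1:ℝ) := by
          refine Finset.sum_congr rfl fun i _ => ?_
          simp [norm_mul, norm_pow, hx, hy]
      _ = k := by simp
  calc ‖x^k - y^k‖
      = ‖∑ i ∈ Finset.range k, x ^ i * y ^ (k - 1 - i)‖ *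
        ‖x - y‖ := by rw [← geom_sum₂_mul, norm_mul]
    _ ≤ k * ‖x-y‖ :=
        mul_le_mul_of_nonneg_right hsum (norm_nonneg _)

/-- For `x, y` on the unit circle, `|P_n(x) - P_n(y)| ≤ (n+1)² φ^{n+1} |x - y|`. -/
theorem stmt4 (x y : ℂ) (hx : ‖x‖ = 1) (hy : ‖y‖ = 1)
    (Px Py : ℕ → ℂ)
    (hPx0 : Px 0 = 1) (hPx1 : Px 1 = 1 + x)
    (hPxrec : ∀ n : ℕ, Px (n + 2) = Px (n + 1) + x ^ (n + 2) * Px n)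
    (hPy0 : Py 0 = 1) (hPy1 : Py 1 = 1 + y)
    (hPyrec : ∀ n : ℕ, Py (n + 2) = Py (n + 1) + y ^ (n + 2) * Py n) :
    ∀ n : ℕ, ‖Px n - Py n‖ ≤
      ((n : ℝ) + 1) ^ 2 * phi ^ (n + 1) * ‖x - y‖ := by
  set c := ‖x - y‖ with hc
  have hc0 : 0 ≤ c := norm_nonneg _
  have hPyb := P_bound y hy Py hPy0 hPy1 hPyrec
  have hphi := phi_pos
  have key : ∀ n : ℕ, ‖Px n - Py n‖ ≤ ((n:ℝ)+1)^2 * phi^(n+1) * c ∧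
      ‖Px (n+1) - Py (n+1)‖ ≤ ((n:ℝ)+2)^2 * phi^(n+2) * c := by
    intro n
    induction n with
    | zero =>
      constructor
      · rw [hPx0, hPy0]
        simp
        positivity
      · rw [hPx1, hPy1]
        have h1 : ‖1 + x - (1 + y)‖ = c := by
          rw [hc]; ring_nf
        rw [h1]
        have h2 : (1:ℝ) ≤ 4 * phi ^ 2 := by nlinarith [one_le_phi]
        have h3 := mul_le_mul_of_nonneg_right h2 hc0
        norm_num
        nlinarith [h3]
    | succ n ih =>
      constructor
      · calc ‖Px (n+1) - Py (n+1)‖ ≤ ((n:ℝ)+2)^2 * phi^(n+2) * c := ih.2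
          _ = ((↑(n+1):ℝ)+1)^2 * phi^((n+1)+1) * c := by push_cast; ring
      have hsplit : Px (n+2) - Py (n+2) =
          (Px (n+1) - Py (n+1)) + x^(n+2) * (Px n - Py n)
          + (x^(n+2) - y^(n+2)) * Py n := by
        rw [hPxrec n, hPyrec n]; ring
      have h3 : ‖(x^(n+2) - y^(n+2)) * Py n‖ ≤ ((n:ℝ)+2) * c * phi^(n+1) := by
        rw [norm_mul]
        have := pow_diff_bound x y hx hy (n+2)
        have hb := hPyb n
        have := mul_le_mul this hb (norm_nonneg _) (by positivity)
        calc ‖x^(n+2) - y^(n+2)‖ * ‖Py n‖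
            ≤ ((n+2 : ℕ) : ℝ) * c * phi^(n+1) := by
              push_cast at this ⊢
              linarith [this]
          _ = ((n:ℝ)+2) * c * phi^(n+1) := by push_cast; ring
      have habs : ‖Px (n+2) - Py (n+2)‖ ≤
          ‖Px (n+1) - Py (n+1)‖ + ‖Px n - Py n‖
          + ((n:ℝ)+2) * c * phi^(n+1) := by
        rw [hsplit]
        calc ‖_‖ ≤ ‖(Px (n+1) - Py (n+1)) + x^(n+2) * (Px n - Py n)‖
              + ‖(x^(n+2) - y^(n+2)) * Py n‖ := norm_add_le _ _
          _ ≤ ‖Px (n+1) - Py (n+1)‖ + ‖x^(n+2) * (Px n - Py n)‖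
              + ‖(x^(n+2) - y^(n+2)) * Py n‖ := by
              linarith [norm_add_le (Px (n+1) - Py (n+1)) (x^(n+2) * (Px n - Py n))]
          _ ≤ ‖Px (n+1) - Py (n+1)‖ + ‖Px n - Py n‖
              + ((n:ℝ)+2) * c * phi^(n+1) := by
              have : ‖x^(n+2) * (Px n - Py n)‖ = ‖Px n - Py n‖ := by
                simp [norm_mul, norm_pow, hx]
              linarith [h3, this.le, this.ge]
      have hfin : ‖Px (n+2) - Py (n+2)‖ ≤
          ((n:ℝ)+2)^2 * phi^(n+2) * c + ((n:ℝ)+1)^2 * phi^(n+1) * c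
          + ((n:ℝ)+2) * c * phi^(n+1) := by
        linarith [habs, ih.1, ih.2]
      have heq : phi ^ (n+3) = phi ^ (n+2) + phi ^ (n+1) := by
        have h : phi ^ (n+3) = phi ^ (n+1) * phi ^ 2 := by ring
        rw [h, phi_sq]; ring
      have hgoal : ((n:ℝ)+2)^2 * phi^(n+2) * c + ((n:ℝ)+1)^2 * phi^(n+1) * c
          + ((n:ℝ)+2) * c * phi^(n+1) ≤ ((n:ℝ)+3)^2 * phi^(n+3) * c := by
        rw [heq]
        have ha : (0:ℝ) ≤ phi^(n+1) := by positivity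
        have hb : (0:ℝ) ≤ phi^(n+2) := by positivity
        have hn : (0:ℝ) ≤ (n:ℝ) := Nat.cast_nonneg n
        nlinarith [mul_nonneg (mul_nonneg hn hb) hc0, mul_nonneg (mul_nonneg hn ha) hc0,
          mul_nonneg hb hc0, mul_nonneg ha hc0, mul_nonneg (mul_nonneg (mul_nonneg hn hn) ha) hc0,
          mul_nonneg (mul_nonneg (mul_nonneg hn hn) hb) hc0]
      calc ‖Px (n+2) - Py (n+2)‖ ≤ ((n:ℝ)+3)^2 * phi^(n+3) * c :=
            hfin.trans hgoal
        _ = ((↑(n+1):ℝ)+2)^2 * phi^((n+1)+2) * c := by push_cast; ring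
  intro n; exact (key n).1
end

section
/- Let f : ℕ → ℝ satisfy f(n) > 1 for all n and Σ_{n=1}^∞ 1/f(n) < ∞. Then the set of t ∈ (0,1) (irrational, with continued fraction partial quotients a_k(t)) such that a_k(t) > f(k) for infinitely many k has Lebesgue measure zero. -/
/-- The Gauss map `x ↦ {1/x}`. -/
noncomputable def gaussMap (x : ℝ) : ℝ := Int.fract (1 / x)

/-- The `k`-th partial quotient `a_k(t)` (for `k ≥ 1`) of the regular continued
fraction of an irrational `t ∈ (0,1)`. -/
noncomputable def cfPQ (t : ℝ) (k : ℕ) : ℤ := ⌊1 / gaussMap^[k - 1] t⌋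

noncomputable def cfDenAux (t : ℝ) : ℕ → ℤ × ℤ
  | 0 => (1, cfPQ t 1)
  | n + 1 => ((cfDenAux t n).2, cfPQ t (n + 2) * (cfDenAux t n).2 + (cfDenAux t n).1)

/-- The denominator `d_n(t)` of the `n`-th convergent. -/
noncomputable def cfDen (t : ℝ) (n : ℕ) : ℤ := (cfDenAux t n).1

noncomputable def cfNumAux (t : ℝ) : ℕ → ℤ × ℤ
  | 0 => (0, 1)
  | n + 1 => ((cfNumAux t n).2, cfPQ t (n + 2) * (cfNumAux t n).2 + (cfNumAux t n).1)

/-- The numerator `c_n(t)` of the `n`-th convergent. -/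
noncomputable def cfNum (t : ℝ) (n : ℕ) : ℤ := (cfNumAux t n).1

open MeasureTheory

namespace BBaux

open Set Filter

/-- The (un-normalized) Gauss density. -/
noncomputable def gdens : ℝ → ENNReal := fun x => ENNReal.ofReal (1 / (1 + x))

/-- The Gauss measure on `(0,1)`. -/
noncomputable def gmu : Measure ℝ := (volume.restrict (Set.Ioo (0:ℝ) 1)).withDensity gdens

lemma gdens_meas : Measurable gdens :=
  ENNReal.measurable_ofReal.comp (measurable_const.div (measurable_const.add measurable_id))

lemma gaussMap_meas : Measurable gaussMap :=
  measurable_fract.comp (measurable_const.div measurable_id)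

lemma gmu_apply {S : Set ℝ} (hS : MeasurableSet S) :
    gmu S = ∫⁻ x in S ∩ Set.Ioo 0 1, gdens x := by
  rw [gmu, withDensity_apply _ hS, Measure.restrict_restrict hS]

lemma gmu_le (S : Set ℝ) (hS : MeasurableSet S) : gmu S ≤ volume (S ∩ Set.Ioo 0 1) := by
  rw [gmu_apply hS]
  calc ∫⁻ x in S ∩ Set.Ioo 0 1, gdens x
      ≤ ∫⁻ _ in S ∩ Set.Ioo 0 1, 1 := by
        refine setLIntegral_mono measurable_const (fun x hx => ?_)
        have hx0 : (0:ℝ) < x := hx.2.1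
        refine ENNReal.ofReal_le_one.mpr ?_
        rw [div_le_one (by linarith)]
        linarith
    _ = volume (S ∩ Set.Ioo 0 1) := by simp

lemma volume_le_two_gmu (S : Set ℝ) (hS : MeasurableSet S) :
    volume (S ∩ Set.Ioo 0 1) ≤ 2 * gmu S := by
  have h1 : (2:ENNReal)⁻¹ * volume (S ∩ Set.Ioo 0 1) ≤ gmu S := by
    rw [gmu_apply hS, ← setLIntegral_const]
    refine setLIntegral_mono gdens_meas (fun x hx => ?_)
    have hx1 : x < 1 := hx.2.2
    have hx0 : (0:ℝ) < x := hx.2.1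
    have : (2:ENNReal)⁻¹ = ENNReal.ofReal (1/2) := by
      rw [ENNReal.ofReal_div_of_pos (by norm_num)]
      norm_num
    rw [this]
    exact ENNReal.ofReal_le_ofReal (by rw [div_le_div_iff₀ (by norm_num) (by linarith)]; linarith)
  calc volume (S ∩ Set.Ioo 0 1) = 2 * (2⁻¹ * volume (S ∩ Set.Ioo 0 1)) := by
        rw [← mul_assoc, ENNReal.mul_inv_cancel (by norm_num) (by norm_num), one_mul]
    _ ≤ 2 * gmu S := mul_le_mul_right h1 2

lemma gmu_Ioo {c d : ℝ} (h0 : 0 ≤ c) (hcd : c ≤ d) (hd : d ≤ 1) :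
    gmu (Set.Ioo c d) = ENNReal.ofReal (Real.log (1+d) - Real.log (1+c)) := by
  have hsub : Set.Ioo c d ∩ Set.Ioo 0 1 = Set.Ioo c d :=
    Set.inter_eq_left.mpr (fun x hx => ⟨lt_of_le_of_lt h0 hx.1, lt_of_lt_of_le hx.2 hd⟩)
  rw [gmu_apply measurableSet_Ioo, hsub]
  have hcont : ContinuousOn (fun x : ℝ => 1/(1+x)) (Set.Icc c d) := by
    refine ContinuousOn.div continuousOn_const (by fun_prop) (fun x hx => ?_)
    have := hx.1; intro h; nlinarith
  have hint : IntegrableOn (fun x : ℝ => 1/(1+x)) (Set.Ioo c d) volume :=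
    (hcont.integrableOn_Icc).mono_set Set.Ioo_subset_Icc_self
  have hnn : 0 ≤ᵐ[volume.restrict (Set.Ioo c d)] fun x : ℝ => 1/(1+x) := by
    filter_upwards [ae_restrict_mem measurableSet_Ioo] with x hx
    have : (0:ℝ) < x := lt_of_le_of_lt h0 hx.1
    positivity
  have := ofReal_integral_eq_lintegral_ofReal hint hnn
  show (∫⁻ x in Set.Ioo c d, ENNReal.ofReal (1/(1+x))) = _
  rw [← this]
  congr 1
  rw [← MeasureTheory.integral_Ioc_eq_integral_Ioo, ← intervalIntegral.integral_of_le hcd]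
  have : ∀ x : ℝ, 1/(1+x) = (fun y : ℝ => y⁻¹) (x + 1) := by intro x; simp [one_div]; ring_nf
  calc (∫ x in c..d, 1/(1+x))
      = ∫ x in c..d, (fun y : ℝ => y⁻¹) (x + 1) := by
        refine intervalIntegral.integral_congr (fun x _ => ?_)
        simp only [one_div]
        ring_nf
    _ = ∫ x in (c+1)..(d+1), x⁻¹ := intervalIntegral.integral_comp_add_right _ 1
    _ = Real.log ((d+1)/(c+1)) := integral_inv_of_pos (by linarith) (by linarith)
    _ = Real.log (1+d) - Real.log (1+c) := by
        rw [Real.log_div (by linarith) (by linarith)]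
        ring_nf

lemma teleterm_nonneg {a : ℝ} (ha0 : 0 ≤ a) (ha1 : a ≤ 1) (n : ℕ) :
    0 ≤ (Real.log ((n:ℝ)+2) - Real.log ((n:ℝ)+1+a)) -
      (Real.log ((n:ℝ)+3) - Real.log ((n:ℝ)+2+a)) := by
  have h1 : Real.log ((n:ℝ)+3) + Real.log ((n:ℝ)+1+a)
      ≤ Real.log ((n:ℝ)+2) + Real.log ((n:ℝ)+2+a) := by
    rw [← Real.log_mul (by positivity) (by positivity),
        ← Real.log_mul (by positivity) (by positivity)]
    apply Real.log_le_log (by positivity)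
    nlinarith
  linarith

lemma telescope {a : ℝ} (ha0 : 0 ≤ a) (ha1 : a ≤ 1) :
    HasSum (fun n : ℕ => (Real.log ((n:ℝ)+2) - Real.log ((n:ℝ)+1+a)) -
      (Real.log ((n:ℝ)+3) - Real.log ((n:ℝ)+2+a)))
      (Real.log 2 - Real.log (1+a)) := by
  set G : ℕ → ℝ := fun n => Real.log ((n:ℝ)+2) - Real.log ((n:ℝ)+1+a) with hG
  have hterm : ∀ n : ℕ, (Real.log ((n:ℝ)+2) - Real.log ((n:ℝ)+1+a)) -
      (Real.log ((n:ℝ)+3) - Real.log ((n:ℝ)+2+a)) = G n - G (n+1) := by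
    intro n
    simp only [hG]
    push_cast
    ring_nf
  have hG0 : Tendsto G atTop (nhds 0) := by
    have hGlog : ∀ n : ℕ, G n = Real.log (((n:ℝ)+2)/((n:ℝ)+1+a)) := by
      intro n
      rw [Real.log_div (by positivity) (by positivity)]
    have hden : Tendsto (fun n : ℕ => (n:ℝ)+1+a) atTop atTop := by
      have := tendsto_atTop_add_const_right atTop (1+a)
        (tendsto_natCast_atTop_atTop : Tendsto (fun n : ℕ => (n:ℝ)) atTop atTop)
      exact this.congr (fun n => by ring)
    have h3 : Tendsto (fun n : ℕ => (1-a)/((n:ℝ)+1+a)) atTop (nhds 0) :=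
      Tendsto.div_atTop tendsto_const_nhds hden
    have h2 : Tendsto (fun n : ℕ => ((n:ℝ)+2)/((n:ℝ)+1+a)) atTop (nhds 1) := by
      have h4 := h3.const_add 1
      rw [add_zero] at h4
      refine h4.congr (fun n => ?_)
      have hpos : (0:ℝ) < (n:ℝ)+1+a := by positivity
      field_simp
      ring
    have h5 := ((Real.continuousAt_log one_ne_zero).tendsto).comp h2
    rw [Real.log_one] at h5
    refine h5.congr (fun n => (hGlog n).symm)
  rw [hasSum_iff_tendsto_nat_of_nonneg (teleterm_nonneg ha0 ha1)]
  have hps : ∀ N : ℕ, ∑ n ∈ Finset.range N, ((Real.log ((n:ℝ)+2) - Real.log ((n:ℝ)+1+a)) -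
      (Real.log ((n:ℝ)+3) - Real.log ((n:ℝ)+2+a))) = G 0 - G N := by
    intro N
    rw [Finset.sum_congr rfl (fun n _ => hterm n)]
    exact Finset.sum_range_sub' G N
  have hG0val : G 0 = Real.log 2 - Real.log (1+a) := by
    simp only [hG]
    norm_num
  have := (tendsto_const_nhds (x := G 0) (f := atTop)).sub hG0
  rw [sub_zero, hG0val] at this
  refine this.congr (fun N => ?_)
  rw [hps N, hG0val]

lemma gmu_S_inter {S : Set ℝ} (hS : MeasurableSet S) : gmu S = gmu (S ∩ Set.Ioo 0 1) := by
  rw [gmu_apply hS, gmu_apply (hS.inter measurableSet_Ioo), Set.inter_assoc, Set.inter_self]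

lemma gmu_countable_zero {C : Set ℝ} (hC : C.Countable) : gmu C = 0 := by
  have h1 : gmu C ≤ volume (C ∩ Set.Ioo 0 1) := gmu_le C hC.measurableSet
  have h2 : volume (C ∩ Set.Ioo 0 1) ≤ volume C := measure_mono Set.inter_subset_left
  have h3 : volume C = 0 := hC.measure_zero volume
  exact le_antisymm (by rw [h3] at h2; exact le_trans h1 h2) (zero_le)

lemma gmu_preimage_Ioi (a : ℝ) : gmu (gaussMap ⁻¹' Set.Ioi a) = gmu (Set.Ioi a) := by
  set a' := min (max a 0) 1 with ha'
  have ha0 : 0 ≤ a' := le_min (le_max_right a 0) zero_le_one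
  have ha1 : a' ≤ 1 := min_le_right _ _
  set I : ℕ → Set ℝ := fun n => Set.Ioo (1/((n:ℝ)+2)) (1/((n:ℝ)+1+a')) with hI
  have hRHS : Set.Ioi a ∩ Set.Ioo (0:ℝ) 1 = Set.Ioo a' 1 := by
    ext x
    simp only [Set.mem_inter_iff, Set.mem_Ioi, Set.mem_Ioo]
    constructor
    · rintro ⟨h1, h2, h3⟩
      exact ⟨lt_of_le_of_lt (min_le_left _ _) (max_lt h1 h2), h3⟩
    · rintro ⟨h1, h2⟩
      rcases le_or_gt (max a 0) 1 with h | h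
      · rw [ha', min_eq_left h] at h1
        exact ⟨lt_of_le_of_lt (le_max_left a 0) h1,
          lt_of_le_of_lt (le_max_right a 0) h1, h2⟩
      · rw [ha', min_eq_right h.le] at h1
        exact absurd (lt_trans h1 h2) (lt_irrefl 1)
  have hval : gmu (Set.Ioi a) = ENNReal.ofReal (Real.log 2 - Real.log (1+a')) := by
    rw [gmu_S_inter measurableSet_Ioi, hRHS, gmu_Ioo ha0 ha1 le_rfl]
    norm_num
  have hIval : ∀ n : ℕ, gmu (I n) = ENNReal.ofReal
      ((Real.log ((n:ℝ)+2) - Real.log ((n:ℝ)+1+a')) -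
        (Real.log ((n:ℝ)+3) - Real.log ((n:ℝ)+2+a'))) := by
    intro n
    have hn2 : (0:ℝ) < (n:ℝ)+2 := by positivity
    have hna : (0:ℝ) < (n:ℝ)+1+a' := by positivity
    have hcd : 1/((n:ℝ)+2) ≤ 1/((n:ℝ)+1+a') :=
      one_div_le_one_div_of_le hna (by linarith)
    have hd1 : 1/((n:ℝ)+1+a') ≤ 1 := by
      rw [div_le_one hna]
      have : (0:ℝ) ≤ (n:ℝ) := Nat.cast_nonneg n
      linarith
    rw [hI]
    rw [gmu_Ioo (by positivity) hcd hd1]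
    congr 1
    have e1 : 1 + 1/((n:ℝ)+1+a') = ((n:ℝ)+2+a')/((n:ℝ)+1+a') := by field_simp; ring
    have e2 : 1 + 1/((n:ℝ)+2) = ((n:ℝ)+3)/((n:ℝ)+2) := by field_simp; ring
    rw [e1, e2, Real.log_div (by positivity) hna.ne', Real.log_div (by positivity) hn2.ne']
    ring
  have hdisj : Pairwise (Function.onFun Disjoint I) := by
    have key : ∀ m n : ℕ, m < n → Disjoint (I m) (I n) := by
      intro m n hmn
      refine Set.disjoint_left.mpr (fun x hxm hxn => ?_)
      have h1 : 1/((n:ℝ)+1+a') ≤ 1/((m:ℝ)+2) := by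
        apply one_div_le_one_div_of_le (by positivity)
        have : (m:ℝ)+1 ≤ (n:ℝ) := by exact_mod_cast hmn
        linarith
      have := hxm.1
      have := hxn.2
      linarith
    intro m n hmn
    rcases lt_or_gt_of_ne hmn with h | h
    · exact key m n h
    · exact (key n m h).symm
  have hImeas : ∀ n, MeasurableSet (I n) := fun n => measurableSet_Ioo
  have hUnion : gmu (⋃ n, I n) = ENNReal.ofReal (Real.log 2 - Real.log (1+a')) := by
    rw [measure_iUnion hdisj hImeas]
    have hs := telescope ha0 ha1
    calc (∑' n, gmu (I n))
        = ∑' (n : ℕ), ENNReal.ofReal ((Real.log ((n:ℝ)+2) - Real.log ((n:ℝ)+1+a')) -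
          (Real.log ((n:ℝ)+3) - Real.log ((n:ℝ)+2+a'))) := tsum_congr hIval
      _ = ENNReal.ofReal (Real.log 2 - Real.log (1+a')) := by
          rw [← ENNReal.ofReal_tsum_of_nonneg (teleterm_nonneg ha0 ha1) hs.summable,
            hs.tsum_eq]
  have hsub1 : ∀ n : ℕ, I n ⊆ gaussMap ⁻¹' Set.Ioi a := by
    intro n x hx
    obtain ⟨hx1, hx2⟩ := hx
    rcases le_or_gt a 1 with haa | haa
    · have haa' : a ≤ a' := le_min (le_max_left a 0) haa
      have hx0 : 0 < x := lt_trans (by positivity) hx1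
      have hy1 : (n:ℝ)+1+a' < 1/x := by
        have := one_div_lt_one_div_of_lt hx0 hx2
        rwa [one_div_one_div] at this
      have hy2 : 1/x < (n:ℝ)+2 := by
        have := one_div_lt_one_div_of_lt (by positivity : (0:ℝ) < 1/((n:ℝ)+2)) hx1
        rwa [one_div_one_div] at this
      have hfl : ⌊1/x⌋ = (n:ℤ)+1 := by
        rw [Int.floor_eq_iff]
        constructor
        · push_cast; linarith
        · push_cast; linarith
      show a < Int.fract (1/x)
      rw [Int.fract, hfl]
      push_cast
      linarith
    · exfalso
      have : a' = 1 := by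
        rw [ha', min_eq_right]
        exact le_max_of_le_left haa.le
      rw [this] at hx2
      have : (n:ℝ)+1+1 = (n:ℝ)+2 := by ring
      rw [this] at hx2
      linarith
  have hsub2 : gaussMap ⁻¹' Set.Ioi a ∩ Set.Ioo 0 1 ⊆
      (⋃ n, I n) ∪ Set.range (fun n : ℕ => ((n:ℝ))⁻¹) := by
    rintro x ⟨hgx, hx0, hx1⟩
    by_cases hrat : ∃ n : ℕ, x = ((n:ℝ))⁻¹
    · right
      obtain ⟨n, hn⟩ := hrat
      exact ⟨n, hn.symm⟩
    · left
      push_neg at hrat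
      have hy : 1 < 1/x := by rw [lt_div_iff₀ hx0]; linarith
      set m : ℤ := ⌊1/x⌋ with hm
      have hm1 : 1 ≤ m := Int.le_floor.mpr (by exact_mod_cast hy.le)
      have hne : 1/x ≠ (m:ℝ) := by
        intro h
        apply hrat m.toNat
        have hmr : ((m.toNat : ℕ):ℝ) = (m:ℝ) := by
          have : ((m.toNat : ℕ):ℤ) = m := Int.toNat_of_nonneg (by omega)
          exact_mod_cast this
        rw [hmr, ← h, inv_div, div_one]
      have hgx' : a < Int.fract (1/x) := hgx
      have hfr : Int.fract (1/x) = 1/x - (m:ℝ) := rfl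
      have hfrpos : 0 < Int.fract (1/x) := by
        rcases (Int.fract_nonneg (1/x)).lt_or_eq with h' | h'
        · exact h'
        · exfalso
          apply hne
          rw [hfr] at h'
          linarith
      have hfr1 : Int.fract (1/x) < 1 := Int.fract_lt_one _
      have ha'lt : a' < Int.fract (1/x) :=
        lt_of_le_of_lt (min_le_left _ _) (max_lt hgx' hfrpos)
      refine Set.mem_iUnion.mpr ⟨(m - 1).toNat, ?_⟩
      have hcast : (((m-1).toNat : ℕ) : ℝ) = (m:ℝ) - 1 := by
        have : (((m-1).toNat : ℕ) : ℤ) = m - 1 := Int.toNat_of_nonneg (by omega)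
        exact_mod_cast this
      have hmpos : (1:ℝ) ≤ (m:ℝ) := by exact_mod_cast hm1
      constructor
      · rw [hcast, show (m:ℝ) - 1 + 2 = (m:ℝ)+1 by ring]
        have h1 : 1/x < (m:ℝ) + 1 := by
          rw [hfr] at hfr1; linarith
        rw [div_lt_iff₀ (by linarith : (0:ℝ) < (m:ℝ)+1)]
        rw [div_lt_iff₀ hx0] at h1
        linarith
      · rw [hcast, show (m:ℝ) - 1 + 1 + a' = (m:ℝ) + a' by ring]
        have h2 : (m:ℝ) + a' < 1/x := by
          rw [hfr] at ha'lt; linarith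
        rw [lt_div_iff₀ (by linarith : (0:ℝ) < (m:ℝ) + a')]
        rw [lt_div_iff₀ hx0] at h2
        linarith
  have hmeas : MeasurableSet (gaussMap ⁻¹' Set.Ioi a) := gaussMap_meas measurableSet_Ioi
  apply le_antisymm
  · rw [gmu_S_inter hmeas]
    calc gmu (gaussMap ⁻¹' Set.Ioi a ∩ Set.Ioo 0 1)
        ≤ gmu ((⋃ n, I n) ∪ Set.range (fun n : ℕ => ((n:ℝ))⁻¹)) := measure_mono hsub2
      _ ≤ gmu (⋃ n, I n) + gmu (Set.range (fun n : ℕ => ((n:ℝ))⁻¹)) := measure_union_le _ _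
      _ = gmu (Set.Ioi a) := by
          rw [gmu_countable_zero (Set.countable_range _), add_zero, hUnion, hval]
  · calc gmu (Set.Ioi a) = gmu (⋃ n, I n) := by rw [hUnion, hval]
      _ ≤ gmu (gaussMap ⁻¹' Set.Ioi a) := measure_mono (Set.iUnion_subset hsub1)

instance : IsFiniteMeasure gmu := by
  constructor
  calc gmu Set.univ ≤ volume (Set.univ ∩ Set.Ioo 0 1) := gmu_le _ MeasurableSet.univ
    _ ≤ volume (Set.Ioo (0:ℝ) 1) := measure_mono Set.inter_subset_right
    _ < ⊤ := by rw [Real.volume_Ioo]; exact ENNReal.ofReal_lt_top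

lemma gauss_mp : MeasurePreserving gaussMap gmu gmu := by
  refine ⟨gaussMap_meas, ?_⟩
  refine ext_of_generate_finite (Set.range Set.Ioi) ?_ isPiSystem_Ioi ?_ ?_
  · exact BorelSpace.measurable_eq.trans (borel_eq_generateFrom_Ioi ℝ)
  · rintro s ⟨b, rfl⟩
    rw [Measure.map_apply gaussMap_meas measurableSet_Ioi]
    exact gmu_preimage_Ioi b
  · rw [Measure.map_apply gaussMap_meas MeasurableSet.univ, Set.preimage_univ]

lemma gauss_iter_mem {t : ℝ} (ht : Irrational t) (h : t ∈ Set.Ioo (0:ℝ) 1) (m : ℕ) :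
    Irrational (gaussMap^[m] t) ∧ gaussMap^[m] t ∈ Set.Ioo (0:ℝ) 1 := by
  induction m with
  | zero => exact ⟨ht, h⟩
  | succ k ih =>
    obtain ⟨ih1, ih2⟩ := ih
    rw [Function.iterate_succ_apply']
    set x := gaussMap^[k] t
    have hinv : Irrational (1/x) := by rw [one_div]; exact ih1.inv
    have hfr : Irrational (gaussMap x) := by
      show Irrational (Int.fract (1/x))
      have : Int.fract (1/x) = 1/x - (⌊1/x⌋ : ℝ) := rfl
      rw [this]
      exact Irrational.sub_intCast hinv _
    refine ⟨hfr, ?_, Int.fract_lt_one _⟩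
    rcases (Int.fract_nonneg (1/x)).lt_or_eq with h' | h'
    · exact h'
    · exfalso
      have : Irrational (0:ℝ) := by rw [h']; exact hfr
      exact this.ne_int 0 (by simp)

end BBaux

/-- Borel–Bernstein type theorem: if `Σ 1/f(n) < ∞` then the set of irrational
`t ∈ (0,1)` with `a_k(t) > f(k)` infinitely often has measure zero. -/
theorem stmt6 (f : ℕ → ℝ) (hf : ∀ n, 1 < f n)
    (hsum : Summable fun n => 1 / f n) :
    volume {t : ℝ | t ∈ Set.Ioo (0 : ℝ) 1 ∧ Irrational t ∧
      {k : ℕ | 1 ≤ k ∧ f k < (cfPQ t k : ℝ)}.Infinite} = 0 := by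
  classical
  open BBaux Filter in
  set s : ℕ → Set ℝ := fun k => {t : ℝ | t ∈ Set.Ioo (0:ℝ) 1 ∧ Irrational t ∧
    f k < (cfPQ t k : ℝ)} with hs
  have hfpos : ∀ k, (0:ℝ) < f k := fun k => lt_trans one_pos (hf k)
  have hsub : ∀ k, s k ⊆ (gaussMap^[k-1] ⁻¹' Set.Ioo 0 (1 / f k)) ∩ Set.Ioo 0 1 := by
    rintro k t ⟨ht01, htirr, htf⟩
    refine ⟨?_, ht01⟩
    obtain ⟨hxirr, hx0, hx1⟩ :=
      (fun p => ⟨p.1, p.2.1, p.2.2⟩ :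
        Irrational (gaussMap^[k-1] t) ∧ gaussMap^[k-1] t ∈ Set.Ioo (0:ℝ) 1 →
        Irrational (gaussMap^[k-1] t) ∧ 0 < gaussMap^[k-1] t ∧ gaussMap^[k-1] t < 1)
        (BBaux.gauss_iter_mem htirr ht01 (k-1))
    set x := gaussMap^[k-1] t
    have hfloor : ((cfPQ t k : ℤ) : ℝ) ≤ 1/x := by
      have := Int.floor_le (1/x)
      simpa [cfPQ] using this
    have h1 : f k < 1/x := lt_of_lt_of_le htf hfloor
    refine ⟨hx0, ?_⟩
    rw [lt_div_iff₀ (hfpos k)]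
    rw [lt_div_iff₀ hx0] at h1
    linarith
  have hmeask : ∀ k, MeasurableSet (gaussMap^[k-1] ⁻¹' Set.Ioo 0 (1 / f k)) :=
    fun k => (BBaux.gaussMap_meas.iterate (k-1)) measurableSet_Ioo
  have hbound : ∀ k, volume (s k) ≤ 2 * ENNReal.ofReal (1 / f k) := by
    intro k
    calc volume (s k)
        ≤ volume ((gaussMap^[k-1] ⁻¹' Set.Ioo 0 (1/f k)) ∩ Set.Ioo 0 1) :=
          measure_mono (hsub k)
      _ ≤ 2 * BBaux.gmu (gaussMap^[k-1] ⁻¹' Set.Ioo 0 (1/f k)) :=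
          BBaux.volume_le_two_gmu _ (hmeask k)
      _ = 2 * BBaux.gmu (Set.Ioo 0 (1/f k)) := by
          rw [(BBaux.gauss_mp.iterate (k-1)).measure_preimage
            measurableSet_Ioo.nullMeasurableSet]
      _ ≤ 2 * ENNReal.ofReal (1/f k) := by
          apply mul_le_mul_right
          calc BBaux.gmu (Set.Ioo 0 (1/f k))
              ≤ volume (Set.Ioo 0 (1/f k) ∩ Set.Ioo 0 1) :=
                BBaux.gmu_le _ measurableSet_Ioo
            _ ≤ volume (Set.Ioo (0:ℝ) (1/f k)) := measure_mono Set.inter_subset_left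
            _ = ENNReal.ofReal (1/f k) := by rw [Real.volume_Ioo, sub_zero]
  have hsum2 : (∑' k, volume (s k)) ≠ ⊤ := by
    refine ne_top_of_le_ne_top ?_ (ENNReal.tsum_le_tsum hbound)
    rw [ENNReal.tsum_mul_left,
      ← ENNReal.ofReal_tsum_of_nonneg (fun n => (one_div_pos.mpr (hfpos n)).le) hsum]
    exact ENNReal.mul_ne_top (by norm_num) ENNReal.ofReal_ne_top
  have hlim : {t : ℝ | t ∈ Set.Ioo (0 : ℝ) 1 ∧ Irrational t ∧
      {k : ℕ | 1 ≤ k ∧ f k < (cfPQ t k : ℝ)}.Infinite} ⊆ limsup s atTop := by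
    rintro t ⟨h1, h2, h3⟩
    rw [mem_limsup_iff_frequently_mem]
    have hfreq : ∃ᶠ k in atTop, k ∈ {k : ℕ | 1 ≤ k ∧ f k < (cfPQ t k : ℝ)} :=
      Nat.frequently_atTop_iff_infinite.mpr h3
    exact hfreq.mono (fun k hk => ⟨h1, h2, hk.2⟩)
  exact le_antisymm
    (le_trans (measure_mono hlim) (le_of_eq (measure_limsup_atTop_eq_zero hsum2)))
    (zero_le)
end

section
/- Let t be the irrational number with continued fraction expansion [0; a_1, a_2, ...] where a_i is a tower of i twos with an i on top (a_1 = 2, a_2 = 2^(2^2), a_3 = 2^(2^(2^3)), ...), and let d_i denote the convergent denominators. Then for all i ≥ 1, a_{i+1} ≥ 2^{d_i}. -/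
/-- `tw k m` is a tower of `k` twos with `m` on top. -/
def tw : ℕ → ℕ → ℕ
  | 0, m => m
  | k + 1, m => 2 ^ tw k m

lemma tw_lt_succ (k m : ℕ) : tw k m + 1 ≤ tw k (m + 1) := by
  induction k with
  | zero => simp [tw]
  | succ k ih =>
    show 2 ^ tw k m + 1 ≤ 2 ^ tw k (m + 1)
    calc 2 ^ tw k m + 1 ≤ 2 ^ tw k m + 2 ^ tw k m := by
          have : (1:ℕ) ≤ 2 ^ tw k m := Nat.one_le_two_pow
          omega
      _ = 2 ^ (tw k m + 1) := by ring
      _ ≤ 2 ^ tw k (m + 1) := Nat.pow_le_pow_right (by norm_num) ih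

lemma tw_mono (k : ℕ) : Monotone (tw k) := by
  apply monotone_nat_of_le_succ
  intro m
  have := tw_lt_succ k m
  omega

lemma tw_pos (k m : ℕ) (hm : 1 ≤ m) : 1 ≤ tw k m := by
  induction k with
  | zero => simpa [tw]
  | succ k ih => exact Nat.one_le_two_pow

lemma dbound (a d : ℕ → ℕ) (ha : ∀ i : ℕ, 1 ≤ i → a i = tw i i)
    (hd0 : d 0 = 1) (hd1 : d 1 = a 1)
    (hdrec : ∀ n : ℕ, d (n + 2) = a (n + 2) * d (n + 1) + d n) :
    ∀ i : ℕ, d i ≤ tw i (i + 1) := by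
  have key : ∀ i : ℕ, d i ≤ tw i (i + 1) ∧ d (i + 1) ≤ tw (i + 1) (i + 2) := by
    intro i
    induction i with
    | zero =>
      constructor
      · simp [hd0, tw]
      · rw [hd1, ha 1 le_rfl]
        exact tw_mono 1 (by norm_num)
    | succ n ih =>
      refine ⟨ih.2, ?_⟩
      rw [hdrec n, ha (n + 2) (by omega)]
      set T := tw (n + 1) (n + 2) with hT
      have h1 : d (n + 1) ≤ T := ih.2
      have h2 : d n ≤ T := le_trans ih.1 (by
        have := tw_lt_succ n (n + 1)
        show tw n (n + 1) ≤ 2 ^ tw n (n + 2)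
        calc tw n (n + 1) ≤ tw n (n + 2) := tw_mono n (by omega)
          _ ≤ 2 ^ tw n (n + 2) := Nat.le_of_lt (Nat.lt_two_pow_self (n := _)))
      have hTpos : 1 ≤ T := tw_pos _ _ (by omega)
      have step1 : tw (n + 2) (n + 2) * d (n + 1) + d n ≤ 2 ^ T * T + T := by
        have : tw (n + 2) (n + 2) = 2 ^ T := rfl
        rw [this]
        exact Nat.add_le_add (Nat.mul_le_mul_left _ h1) h2
      have step2 : 2 ^ T * T + T ≤ 2 ^ T * 2 ^ T := by
        have hT2 : T + 1 ≤ 2 ^ T := Nat.lt_two_pow_self (n := T)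
        calc 2 ^ T * T + T ≤ 2 ^ T * T + 2 ^ T :=
              Nat.add_le_add_left (Nat.le_of_lt (Nat.lt_two_pow_self (n := T))) _
          _ = 2 ^ T * (T + 1) := by ring
          _ ≤ 2 ^ T * 2 ^ T := Nat.mul_le_mul_left _ hT2
      have step3 : 2 ^ T * 2 ^ T ≤ tw (n + 2) (n + 3) := by
        show 2 ^ T * 2 ^ T ≤ 2 ^ tw (n + 1) (n + 3)
        rw [← pow_add]
        apply Nat.pow_le_pow_right (by norm_num)
        show T + T ≤ 2 ^ tw n (n + 3)
        have hTT : T + T = 2 ^ (tw n (n + 2) + 1) := by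
          have : T = 2 ^ tw n (n + 2) := rfl
          rw [this]; ring
        rw [hTT]
        apply Nat.pow_le_pow_right (by norm_num)
        exact tw_lt_succ n (n + 2)
      exact le_trans (le_trans step1 step2) step3
  intro i; exact (key i).1

/-- For the continued fraction whose partial quotients `a_i` are towers of `i`
twos topped with `i`, the denominators satisfy `a_{i+1} ≥ 2^{d_i}`. -/
theorem stmt10 (a d : ℕ → ℕ) (ha : ∀ i : ℕ, 1 ≤ i → a i = tw i i)
    (hd0 : d 0 = 1) (hd1 : d 1 = a 1)
    (hdrec : ∀ n : ℕ, d (n + 2) = a (n + 2) * d (n + 1) + d n) :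
    ∀ i : ℕ, 1 ≤ i → 2 ^ d i ≤ a (i + 1) := by
  intro i hi
  rw [ha (i + 1) (by omega)]
  show 2 ^ d i ≤ 2 ^ tw i (i + 1)
  exact Nat.pow_le_pow_right (by norm_num) (dbound a d ha hd0 hd1 hdrec i)
end

section
/- Let C = b_0 + K_{n=1}^∞ (a_n/b_n) be a continued fraction whose odd-indexed convergents tend to f_1 and even-indexed convergents tend to f_2 with f_1 ≠ f_2. Suppose there exist positive constants c_1, c_2, c_3 such that c_1 ≤ |b_i| ≤ c_2 for all i ≥ 1 and |a_{2i+1}/a_{2i}| ≤ c_3 for all i ≥ 1. Then C does not converge generally. -/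
open Filter

/-- Chordal metric on the Riemann sphere `ℂ ∪ {∞}`, with `none = ∞`. -/
noncomputable def sph : Option ℂ → Option ℂ → ℝ
  | none, none => 0
  | none, some z => 1 / Real.sqrt (1 + ‖z‖ ^ 2)
  | some w, none => 1 / Real.sqrt (1 + ‖w‖ ^ 2)
  | some w, some z =>
      ‖z - w‖ /
        (Real.sqrt (1 + ‖w‖ ^ 2) * Real.sqrt (1 + ‖z‖ ^ 2))

/-- `S_n(w) = (A_n + w A_{n-1})/(B_n + w B_{n-1})`, with `S_n(∞) = A_{n-1}/B_{n-1}`. -/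
noncomputable def Sval (An Bn An' Bn' : ℂ) : Option ℂ → ℂ
  | none => An' / Bn'
  | some w => (An + w * An') / (Bn + w * Bn')

/-- Convergence of a sequence of complex numbers to a point of `ℂ ∪ {∞}`. -/
def TendstoSphere (s : ℕ → ℂ) : Option ℂ → Prop
  | none => Tendsto (fun n => ‖s n‖) atTop atTop
  | some L => Tendsto s atTop (nhds L)

/-- The continued fraction with numerator convergents `A` and denominator
convergents `B` (indexed so that `A n` is the classical `A_{n-1}`) converges
generally to `f ∈ ℂ ∪ {∞}`. -/
def GenConvTo (A B : ℕ → ℂ) (f : Option ℂ) : Prop :=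
  ∃ v w : ℕ → Option ℂ,
    0 < Filter.liminf (fun n => sph (v n) (w n)) atTop ∧
    TendstoSphere (fun n => Sval (A (n + 1)) (B (n + 1)) (A n) (B n) (v n)) f ∧
    TendstoSphere (fun n => Sval (A (n + 1)) (B (n + 1)) (A n) (B n) (w n)) f

namespace CFaux
open Complex

noncomputable def wdg (x y : ℂ × ℂ) : ℂ := x.1 * y.2 - x.2 * y.1

noncomputable def hip (x y : ℂ × ℂ) : ℂ :=
  x.1 * (starRingEnd ℂ) y.1 + x.2 * (starRingEnd ℂ) y.2

noncomputable def cnr (x : ℂ × ℂ) : ℝ := Real.sqrt (normSq x.1 + normSq x.2)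

noncomputable def cdd (x y : ℂ × ℂ) : ℝ := Norm.norm (wdg x y) / (cnr x * cnr y)

lemma nsq_nonneg (x : ℂ × ℂ) : 0 ≤ normSq x.1 + normSq x.2 :=
  add_nonneg (normSq_nonneg _) (normSq_nonneg _)

lemma cnr_nonneg (x : ℂ × ℂ) : 0 ≤ cnr x := Real.sqrt_nonneg _

lemma cnr_sq (x : ℂ × ℂ) : cnr x ^ 2 = normSq x.1 + normSq x.2 :=
  Real.sq_sqrt (nsq_nonneg x)

lemma cnr_pos {x : ℂ × ℂ} (h : x ≠ 0) : 0 < cnr x := by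
  apply Real.sqrt_pos.2
  rcases (not_and_or.1 (fun hc => h (Prod.ext_iff.2 ⟨hc.1, hc.2⟩))) with h1 | h1
  · have := normSq_pos.2 h1
    have := normSq_nonneg x.2
    linarith
  · have := normSq_pos.2 h1
    have := normSq_nonneg x.1
    linarith

lemma abs_fst_le (x : ℂ × ℂ) : Norm.norm x.1 ≤ cnr x := by
  rw [Complex.norm_def]
  exact Real.sqrt_le_sqrt (by linarith [normSq_nonneg x.2])

lemma abs_snd_le (x : ℂ × ℂ) : Norm.norm x.2 ≤ cnr x := by
  rw [Complex.norm_def]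
  exact Real.sqrt_le_sqrt (by linarith [normSq_nonneg x.1])

lemma lagrange (x y : ℂ × ℂ) :
    normSq (wdg x y) + normSq (hip x y)
      = (normSq x.1 + normSq x.2) * (normSq y.1 + normSq y.2) := by
  simp only [wdg, hip, normSq_apply, mul_re, mul_im, sub_re, sub_im, add_re, add_im,
    conj_re, conj_im]
  ring

lemma abs_wdg_le (x y : ℂ × ℂ) : Norm.norm (wdg x y) ≤ cnr x * cnr y := by
  have h := lagrange x y
  have h1 : normSq (wdg x y) ≤ (normSq x.1 + normSq x.2) * (normSq y.1 + normSq y.2) := by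
    nlinarith [normSq_nonneg (hip x y)]
  calc Norm.norm (wdg x y) = Real.sqrt (normSq (wdg x y)) := Complex.norm_def _
    _ ≤ Real.sqrt ((normSq x.1 + normSq x.2) * (normSq y.1 + normSq y.2)) :=
        Real.sqrt_le_sqrt h1
    _ = cnr x * cnr y := by rw [Real.sqrt_mul (nsq_nonneg x)]; rfl

lemma abs_hip_le (x y : ℂ × ℂ) : Norm.norm (hip x y) ≤ cnr x * cnr y := by
  have h := lagrange x y
  have h1 : normSq (hip x y) ≤ (normSq x.1 + normSq x.2) * (normSq y.1 + normSq y.2) := by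
    nlinarith [normSq_nonneg (wdg x y)]
  calc Norm.norm (hip x y) = Real.sqrt (normSq (hip x y)) := Complex.norm_def _
    _ ≤ Real.sqrt ((normSq x.1 + normSq x.2) * (normSq y.1 + normSq y.2)) :=
        Real.sqrt_le_sqrt h1
    _ = cnr x * cnr y := by rw [Real.sqrt_mul (nsq_nonneg x)]; rfl

lemma wdg_identity (x y z : ℂ × ℂ) :
    wdg x z * ((normSq y.1 : ℂ) + (normSq y.2 : ℂ))
      = wdg x y * hip z y + wdg y z * hip x y := by
  rw [← Complex.mul_conj, ← Complex.mul_conj]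
  simp only [wdg, hip]
  ring

lemma wdg_tri (x y z : ℂ × ℂ) :
    Norm.norm (wdg x z) * cnr y
      ≤ Norm.norm (wdg x y) * cnr z + Norm.norm (wdg y z) * cnr x := by
  by_cases hy : y = 0
  · subst hy
    have hz0 : cnr (0 : ℂ × ℂ) = 0 := by simp [cnr]
    rw [hz0, mul_zero]
    have h1 : (0:ℝ) ≤ Norm.norm (wdg x 0) * cnr z :=
      mul_nonneg (norm_nonneg _) (cnr_nonneg _)
    have h2 : (0:ℝ) ≤ Norm.norm (wdg 0 z) * cnr x :=
      mul_nonneg (norm_nonneg _) (cnr_nonneg _)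
    linarith
  · have hyp := cnr_pos hy
    have h2 : Norm.norm (wdg x z) * cnr y ^ 2
        ≤ (Norm.norm (wdg x y) * cnr z + Norm.norm (wdg y z) * cnr x) * cnr y := by
      have hid := wdg_identity x y z
      have habs : Norm.norm (wdg x z * ((normSq y.1 : ℂ) + (normSq y.2 : ℂ)))
          ≤ Norm.norm (wdg x y) * Norm.norm (hip z y)
            + Norm.norm (wdg y z) * Norm.norm (hip x y) := by
        rw [hid]
        calc Norm.norm (wdg x y * hip z y + wdg y z * hip x y)
            ≤ Norm.norm (wdg x y * hip z y) + Norm.norm (wdg y z * hip x y) :=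
              norm_add_le _ _
          _ = _ := by rw [norm_mul, norm_mul]
      have hcast : Norm.norm (wdg x z * ((normSq y.1 : ℂ) + (normSq y.2 : ℂ)))
          = Norm.norm (wdg x z) * cnr y ^ 2 := by
        rw [norm_mul]
        congr 1
        rw [cnr_sq, ← Complex.ofReal_add, Complex.norm_real, Real.norm_eq_abs, _root_.abs_of_nonneg (nsq_nonneg y)]
      rw [hcast] at habs
      have h3 : Norm.norm (hip z y) ≤ cnr z * cnr y := abs_hip_le z y
      have h4 : Norm.norm (hip x y) ≤ cnr x * cnr y := abs_hip_le x y
      nlinarith [norm_nonneg (wdg x y), norm_nonneg (wdg y z),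
        cnr_nonneg x, cnr_nonneg z, norm_nonneg (hip z y), norm_nonneg (hip x y)]
    nlinarith [h2, mul_pos hyp hyp]

lemma cdd_nonneg (x y : ℂ × ℂ) : 0 ≤ cdd x y :=
  div_nonneg (norm_nonneg _) (mul_nonneg (cnr_nonneg _) (cnr_nonneg _))

lemma cdd_le_one {x y : ℂ × ℂ} (hx : x ≠ 0) (hy : y ≠ 0) : cdd x y ≤ 1 := by
  rw [cdd, div_le_one (mul_pos (cnr_pos hx) (cnr_pos hy))]
  exact abs_wdg_le x y

lemma wdg_anticomm (x y : ℂ × ℂ) : wdg x y = - wdg y x := by unfold wdg; ring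

lemma cdd_comm (x y : ℂ × ℂ) : cdd x y = cdd y x := by
  rw [cdd, cdd, wdg_anticomm, norm_neg, mul_comm]

lemma cdd_triangle {x y z : ℂ × ℂ} (hx : x ≠ 0) (hy : y ≠ 0) (hz : z ≠ 0) :
    cdd x z ≤ cdd x y + cdd y z := by
  have px := cnr_pos hx
  have py := cnr_pos hy
  have pz := cnr_pos hz
  rw [cdd, cdd, cdd, div_add_div _ _ (ne_of_gt (mul_pos px py)) (ne_of_gt (mul_pos py pz)),
    div_le_div_iff₀ (mul_pos px pz) (mul_pos (mul_pos px py) (mul_pos py pz))]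
  have h := wdg_tri x y z
  nlinarith [norm_nonneg (wdg x z), norm_nonneg (wdg x y),
    norm_nonneg (wdg y z), mul_le_mul_of_nonneg_right h
      (by positivity : (0:ℝ) ≤ cnr x * cnr y * cnr z)]


noncomputable def rep : Option ℂ → ℂ × ℂ
  | none => (1, 0)
  | some z => (z, 1)

lemma rep_ne (p : Option ℂ) : rep p ≠ 0 := by
  cases p <;> simp [rep, Prod.ext_iff]

lemma cnr_one_zero : cnr ((1:ℂ), 0) = 1 := by simp [cnr]

lemma cnr_zero_one : cnr ((0:ℂ), 1) = 1 := by simp [cnr]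

lemma cnr_pair (z : ℂ) : cnr (z, 1) = Real.sqrt (normSq z + 1) := by simp [cnr]

lemma one_le_cnr_pair (z : ℂ) : 1 ≤ cnr (z, 1) := by
  rw [cnr_pair]
  have h : (1:ℝ) = Real.sqrt 1 := by simp
  rw [h]
  exact Real.sqrt_le_sqrt (by linarith [normSq_nonneg z])

lemma sph_eq_cdd (p q : Option ℂ) : sph p q = cdd (rep p) (rep q) := by
  cases p with
  | none => cases q with
    | none => simp [sph, cdd, rep, wdg]
    | some z =>
        show 1 / Real.sqrt (1 + Norm.norm z ^ 2) = _
        rw [Complex.sq_norm]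
        simp [cdd, rep, wdg, cnr_one_zero, cnr_pair, add_comm]
  | some w => cases q with
    | none =>
        show 1 / Real.sqrt (1 + Norm.norm w ^ 2) = _
        rw [Complex.sq_norm]
        simp [cdd, rep, wdg, cnr_one_zero, cnr_pair, add_comm]
    | some z =>
        show Norm.norm (z - w) / _ = _
        rw [Complex.sq_norm, Complex.sq_norm]
        simp only [cdd, rep, wdg, cnr_pair]
        rw [show w * 1 - 1 * z = -(z - w) by ring, norm_neg]
        rw [add_comm (normSq w) 1, add_comm (normSq z) 1]

noncomputable def Mv (A B : ℕ → ℂ) (n : ℕ) (x : ℂ × ℂ) : ℂ × ℂ :=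
  (A (n+1) * x.2 + A n * x.1, B (n+1) * x.2 + B n * x.1)

lemma Sval_eq_Mv (A B : ℕ → ℂ) (n : ℕ) (p : Option ℂ) :
    Sval (A (n+1)) (B (n+1)) (A n) (B n) p
      = (Mv A B n (rep p)).1 / (Mv A B n (rep p)).2 := by
  cases p with
  | none => show A n / B n = _; simp [Mv, rep]
  | some z =>
      show (A (n+1) + z * A n) / (B (n+1) + z * B n) = _
      simp only [Mv, rep]
      congr 1 <;> ring

lemma wdg_Mv (A B : ℕ → ℂ) (n : ℕ) (x y : ℂ × ℂ) :
    wdg (Mv A B n x) (Mv A B n y) = wdg (A n, B n) (A (n+1), B (n+1)) * wdg x y := by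
  simp only [wdg, Mv]
  ring

lemma Mv_inf (A B : ℕ → ℂ) (n : ℕ) : Mv A B n ((1:ℂ), 0) = (A n, B n) := by
  simp [Mv]

lemma Mv_zero (A B : ℕ → ℂ) (n : ℕ) : Mv A B n ((0:ℂ), 1) = (A (n+1), B (n+1)) := by
  simp [Mv]

lemma cnr_add_le (x y : ℂ × ℂ) : cnr (x + y) ≤ cnr x + cnr y := by
  have h1 : normSq (x.1 + y.1) + normSq (x.2 + y.2) ≤ (cnr x + cnr y)^2 := by
    have e1 : normSq (x.1 + y.1)
        = normSq x.1 + normSq y.1 + 2 * (x.1 * (starRingEnd ℂ) y.1).re := normSq_add x.1 y.1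
    have e2 : normSq (x.2 + y.2)
        = normSq x.2 + normSq y.2 + 2 * (x.2 * (starRingEnd ℂ) y.2).re := normSq_add x.2 y.2
    have h3 : (x.1 * (starRingEnd ℂ) y.1).re + (x.2 * (starRingEnd ℂ) y.2).re
        ≤ cnr x * cnr y := by
      have hh : (x.1 * (starRingEnd ℂ) y.1).re + (x.2 * (starRingEnd ℂ) y.2).re
          = (hip x y).re := by simp [hip]
      rw [hh]
      exact le_trans (Complex.re_le_norm _) (abs_hip_le x y)
    have hsq : (cnr x + cnr y)^2
        = (normSq x.1 + normSq x.2) + (normSq y.1 + normSq y.2) + 2 * (cnr x * cnr y) := by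
      have hx2 : cnr x ^ 2 = normSq x.1 + normSq x.2 := cnr_sq x
      have hy2 : cnr y ^ 2 = normSq y.1 + normSq y.2 := cnr_sq y
      nlinarith [hx2, hy2]
    rw [e1, e2, hsq]
    linarith
  have h0 : cnr (x + y) = Real.sqrt (normSq (x.1 + y.1) + normSq (x.2 + y.2)) := by
    simp [cnr, Prod.fst_add, Prod.snd_add]
  rw [h0]
  calc Real.sqrt (normSq (x.1 + y.1) + normSq (x.2 + y.2))
      ≤ Real.sqrt ((cnr x + cnr y)^2) := Real.sqrt_le_sqrt h1
    _ = cnr x + cnr y := Real.sqrt_sq (add_nonneg (cnr_nonneg x) (cnr_nonneg y))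

lemma cnr_smul (c : ℂ) (x : ℂ × ℂ) : cnr (c * x.1, c * x.2) = Norm.norm c * cnr x := by
  simp only [cnr, normSq_mul]
  rw [← mul_add, Real.sqrt_mul (normSq_nonneg c), ← Complex.norm_def]

lemma cnr_Mv_le (A B : ℕ → ℂ) (n : ℕ) (x : ℂ × ℂ) :
    cnr (Mv A B n x) ≤ (cnr (A n, B n) + cnr (A (n+1), B (n+1))) * cnr x := by
  have hx : Mv A B n x = (x.1 * (A n, B n).1, x.1 * (A n, B n).2)
      + (x.2 * (A (n+1), B (n+1)).1, x.2 * (A (n+1), B (n+1)).2) := by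
    simp only [Mv, Prod.mk_add_mk, Prod.ext_iff]
    constructor <;> ring
  rw [hx]
  calc cnr _ ≤ cnr (x.1 * (A n, B n).1, x.1 * (A n, B n).2)
        + cnr (x.2 * (A (n+1), B (n+1)).1, x.2 * (A (n+1), B (n+1)).2) := cnr_add_le _ _
    _ = Norm.norm x.1 * cnr (A n, B n) + Norm.norm x.2 * cnr (A (n+1), B (n+1)) := by
        rw [cnr_smul, cnr_smul]
    _ ≤ cnr x * cnr (A n, B n) + cnr x * cnr (A (n+1), B (n+1)) := by
        have h1 := abs_fst_le x
        have h2 := abs_snd_le x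
        have h3 := cnr_nonneg (A n, B n)
        have h4 := cnr_nonneg (A (n+1), B (n+1))
        nlinarith
    _ = (cnr (A n, B n) + cnr (A (n+1), B (n+1))) * cnr x := by ring

lemma tend_dd (X : ℕ → ℂ × ℂ) (f : Option ℂ)
    (h : TendstoSphere (fun n => (X n).1 / (X n).2) f) :
    Tendsto (fun n => cdd (X n) (rep f) * cdd (X n) ((1:ℂ), 0)) atTop (nhds 0) := by
  cases f with
  | some L =>
      have hq : Tendsto (fun n => (X n).1 / (X n).2) atTop (nhds L) := h
      have htends : Tendsto (fun n => Norm.norm ((X n).1 / (X n).2 - L)) atTop (nhds 0) := by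
        have := (tendsto_iff_norm_sub_tendsto_zero).1 hq
        simpa using this
      apply squeeze_zero (fun n => mul_nonneg (cdd_nonneg _ _) (cdd_nonneg _ _)) _ htends
      intro n
      by_cases h2 : (X n).2 = 0
      · have hz : cdd (X n) ((1:ℂ), 0) = 0 := by
          have hw : wdg (X n) ((1:ℂ), 0) = -(X n).2 := by simp [wdg]
          simp [cdd, hw, h2]
        rw [hz, mul_zero]
        exact norm_nonneg _
      · have hXne : X n ≠ 0 := fun hc => h2 (by rw [hc]; rfl)
        have hb1 : cdd (X n) ((1:ℂ), 0) ≤ 1 :=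
          cdd_le_one hXne (by simp [Prod.ext_iff])
        have hb2 : cdd (X n) (rep (some L)) ≤ Norm.norm ((X n).1 / (X n).2 - L) := by
          have hw : wdg (X n) (L, 1) = (X n).2 * ((X n).1 / (X n).2 - L) := by
            simp only [wdg]
            field_simp
            try ring
          show cdd (X n) (L, 1) ≤ _
          rw [cdd, hw, norm_mul]
          have hc1 : Norm.norm (X n).2 ≤ cnr (X n) := abs_snd_le _
          have hc2 : 1 ≤ cnr (L, 1) := one_le_cnr_pair L
          have hc3 : 0 < cnr (X n) := cnr_pos hXne
          rw [div_le_iff₀ (by nlinarith)]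
          have dnn : (0:ℝ) ≤ Norm.norm ((X n).1 / (X n).2 - L) := norm_nonneg _
          nlinarith [mul_le_mul_of_nonneg_right hc1 dnn,
            mul_le_mul_of_nonneg_left hc2 (mul_nonneg hc3.le dnn)]
        calc cdd (X n) (rep (some L)) * cdd (X n) ((1:ℂ), 0)
            ≤ Norm.norm ((X n).1 / (X n).2 - L) * 1 :=
              mul_le_mul hb2 hb1 (cdd_nonneg _ _)
                (norm_nonneg _)
          _ = _ := mul_one _
  | none =>
      have hq : Tendsto (fun n => Norm.norm ((X n).1 / (X n).2)) atTop atTop := h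
      have htends : Tendsto (fun n => (Norm.norm ((X n).1 / (X n).2))⁻¹) atTop (nhds 0) :=
        hq.inv_tendsto_atTop
      apply squeeze_zero' (Eventually.of_forall fun n => mul_nonneg (cdd_nonneg _ _) (cdd_nonneg _ _))
        _ htends
      filter_upwards [hq.eventually_ge_atTop 1] with n hn
      have hqne : (X n).1 / (X n).2 ≠ 0 := by
        intro hc
        rw [hc] at hn
        norm_num at hn

      have h2 : (X n).2 ≠ 0 := by
        intro hc
        rw [hc, div_zero] at hqne
        exact hqne rfl
      have h1 : (X n).1 ≠ 0 := fun hc => hqne (by rw [hc, zero_div])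
      have hXne : X n ≠ 0 := fun hc => h2 (by rw [hc]; rfl)
      have hb1 : cdd (X n) ((1:ℂ), 0) ≤ 1 := cdd_le_one hXne (by simp [Prod.ext_iff])
      have hb2 : cdd (X n) ((1:ℂ), 0) ≤ (Norm.norm ((X n).1 / (X n).2))⁻¹ := by
        have hw : wdg (X n) ((1:ℂ), 0) = -(X n).2 := by simp [wdg]
        rw [cdd, hw, norm_neg, cnr_one_zero, mul_one, norm_div]
        rw [inv_div]
        apply div_le_div₀ (norm_nonneg _) le_rfl (by
          simpa using (norm_pos_iff.2 h1)) (abs_fst_le _)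
      show cdd (X n) (rep none) * cdd (X n) ((1:ℂ), 0) ≤ _
      calc cdd (X n) (rep none) * cdd (X n) ((1:ℂ), 0)
          = cdd (X n) ((1:ℂ), 0) * cdd (X n) ((1:ℂ), 0) := rfl
        _ ≤ 1 * (Norm.norm ((X n).1 / (X n).2))⁻¹ :=
            mul_le_mul hb1 hb2 (cdd_nonneg _ _) zero_le_one
        _ = _ := one_mul _

lemma tend_dd1 (X : ℕ → ℂ × ℂ) (L : ℂ) (hL : L ≠ 0)
    (h : Tendsto (fun n => (X n).1 / (X n).2) atTop (nhds L)) :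
    Tendsto (fun n => cdd (X n) (L, 1)) atTop (nhds 0) := by
  have htends : Tendsto (fun n => Norm.norm ((X n).1 / (X n).2 - L)) atTop (nhds 0) := by
    have := (tendsto_iff_norm_sub_tendsto_zero).1 h
    simpa using this
  apply squeeze_zero' (Eventually.of_forall fun n => cdd_nonneg _ _) _ htends
  have hev : ∀ᶠ n in atTop, Norm.norm ((X n).1 / (X n).2 - L) < Norm.norm L := by
    have : Tendsto (fun n => Norm.norm ((X n).1 / (X n).2 - L)) atTop (nhds 0) := htends
    exact this.eventually_lt_const (norm_pos_iff.2 hL)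
  filter_upwards [hev] with n hn
  have hqne : (X n).1 / (X n).2 ≠ 0 := by
    intro hc
    rw [hc] at hn
    simp at hn
  have h2 : (X n).2 ≠ 0 := by
    intro hc
    rw [hc, div_zero] at hqne
    exact hqne rfl
  have hXne : X n ≠ 0 := fun hc => h2 (by rw [hc]; rfl)
  have hw : wdg (X n) (L, 1) = (X n).2 * ((X n).1 / (X n).2 - L) := by
    simp only [wdg]
    field_simp
    try ring
  rw [cdd, hw, norm_mul]
  have hc1 : Norm.norm (X n).2 ≤ cnr (X n) := abs_snd_le _
  have hc2 : 1 ≤ cnr (L, 1) := one_le_cnr_pair L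
  have hc3 : 0 < cnr (X n) := cnr_pos hXne
  rw [div_le_iff₀ (by nlinarith)]
  have dnn : (0:ℝ) ≤ Norm.norm ((X n).1 / (X n).2 - L) := norm_nonneg _
  nlinarith [mul_le_mul_of_nonneg_right hc1 dnn,
    mul_le_mul_of_nonneg_left hc2 (mul_nonneg hc3.le dnn)]

lemma cnr_zero : cnr (0 : ℂ × ℂ) = 0 := by simp [cnr]

lemma cdd_pos {x y : ℂ × ℂ} (hx : x ≠ 0) (hy : y ≠ 0) (hw : wdg x y ≠ 0) : 0 < cdd x y :=
  div_pos (norm_pos_iff.2 hw) (mul_pos (cnr_pos hx) (cnr_pos hy))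

lemma abs_wdg_eq {x y : ℂ × ℂ} (hx : x ≠ 0) (hy : y ≠ 0) :
    Norm.norm (wdg x y) = cdd x y * (cnr x * cnr y) := by
  rw [cdd, div_mul_cancel₀]
  exact ne_of_gt (mul_pos (cnr_pos hx) (cnr_pos hy))

lemma wdg_zero_left (y : ℂ × ℂ) : wdg 0 y = 0 := by simp [wdg]

lemma wdg_zero_right (x : ℂ × ℂ) : wdg x 0 = 0 := by simp [wdg]

lemma TS_some {s : ℕ → ℂ} {L : ℂ} (h : TendstoSphere s (some L)) :
    Tendsto s atTop (nhds L) := h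

end CFaux

open CFaux

set_option maxHeartbeats 1000000

/-- If the odd and even classical convergents of `b_0 + K(a_n/b_n)` tend to
different limits, the `b_i` are bounded above and below and the ratios
`|a_{2i+1}/a_{2i}|` are bounded, then the continued fraction does not converge
generally. -/
theorem stmt14 (a b : ℕ → ℂ) (A B : ℕ → ℂ)
    (hA0 : A 0 = 1) (hB0 : B 0 = 0) (hA1 : A 1 = b 0) (hB1 : B 1 = 1)
    (hArec : ∀ n : ℕ, A (n + 2) = b (n + 1) * A (n + 1) + a (n + 1) * A n)
    (hBrec : ∀ n : ℕ, B (n + 2) = b (n + 1) * B (n + 1) + a (n + 1) * B n)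
    (f₁ f₂ : ℂ)
    (hodd : Tendsto (fun n => A (2 * n + 2) / B (2 * n + 2)) atTop (nhds f₁))
    (heven : Tendsto (fun n => A (2 * n + 1) / B (2 * n + 1)) atTop (nhds f₂))
    (hne : f₁ ≠ f₂)
    (c₁ c₂ c₃ : ℝ) (hc₁ : 0 < c₁) (hc₂ : 0 < c₂) (hc₃ : 0 < c₃)
    (hb : ∀ i : ℕ, 1 ≤ i → c₁ ≤ ‖b i‖ ∧ ‖b i‖ ≤ c₂)
    (hab : ∀ i : ℕ, 1 ≤ i → ‖a (2 * i + 1) / a (2 * i)‖ ≤ c₃) :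
    ∀ f : Option ℂ, ¬ GenConvTo A B f := by
  intro f hGC
  obtain ⟨v, w, hlim, hv, hw⟩ := hGC
  classical
  -- merged convergence of the two parities
  have hup : ∀ σ : ℝ, 0 < σ → ∀ᶠ m in atTop,
      Norm.norm (A m / B m - (if Even m then f₁ else f₂)) < σ := by
    intro σ hσ
    obtain ⟨N1, h1⟩ := Metric.tendsto_atTop.1 hodd σ hσ
    obtain ⟨N2, h2⟩ := Metric.tendsto_atTop.1 heven σ hσ
    rw [eventually_atTop]
    refine ⟨2*N1 + 2*N2 + 2, fun m hm => ?_⟩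
    by_cases hp : Even m
    · obtain ⟨k, hk⟩ := id hp
      have h3 := h1 (k-1) (by omega)
      rw [if_pos hp]
      have hm2 : 2*(k-1)+2 = m := by omega
      rw [hm2] at h3
      rwa [Complex.dist_eq] at h3
    · obtain ⟨k, hk⟩ := Nat.not_even_iff_odd.1 hp
      have h3 := h2 k (by omega)
      have hm2 : 2*k+1 = m := by omega
      rw [hm2] at h3
      rw [if_neg hp]
      rwa [Complex.dist_eq] at h3
  -- b's are nonzero
  have hbne : ∀ i, 1 ≤ i → b i ≠ 0 := by
    intro i hi hc
    have h := (hb i hi).1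
    rw [hc, norm_zero] at h
    linarith
  -- no two consecutive zero denominators
  have hBcons : ∀ m, B m = 0 → B (m+1) = 0 → False := by
    intro m hm hm1
    have hall : ∀ d, B (m + d) = 0 ∧ B (m + d + 1) = 0 := by
      intro d
      induction d with
      | zero => exact ⟨hm, hm1⟩
      | succ d ih =>
          refine ⟨ih.2, ?_⟩
          have hr := hBrec (m + d)
          have e : m + (d+1) + 1 = m + d + 2 := by ring
          rw [e, hr, ih.1, ih.2]
          ring
    have hBall : ∀ k, m ≤ k → B k = 0 := by
      intro k hk
      have h := (hall (k - m)).1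
      rwa [Nat.add_sub_cancel' hk] at h
    have e1 : f₁ = 0 := by
      apply tendsto_nhds_unique_of_eventuallyEq hodd (tendsto_const_nhds : Tendsto (fun _ : ℕ => (0:ℂ)) atTop (nhds 0))
      rw [EventuallyEq, eventually_atTop]
      exact ⟨m, fun n hn => by rw [hBall (2*n+2) (by omega), div_zero]⟩
    have e2 : f₂ = 0 := by
      apply tendsto_nhds_unique_of_eventuallyEq heven (tendsto_const_nhds : Tendsto (fun _ : ℕ => (0:ℂ)) atTop (nhds 0))
      rw [EventuallyEq, eventually_atTop]
      exact ⟨m, fun n hn => by rw [hBall (2*n+1) (by omega), div_zero]⟩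
    exact hne (e1.trans e2.symm)
  -- columns are nonzero

  have hcolAB : ∀ m, ¬(A m = 0 ∧ B m = 0) := by
    by_contra hcon
    push_neg at hcon
    obtain ⟨n0, hA00, hB00⟩ := hcon
    -- n0 ≥ 2
    match n0, hA00, hB00 with
    | 0, hA00, hB00 => rw [hA0] at hA00; exact one_ne_zero hA00
    | 1, hA00, hB00 => rw [hB1] at hB00; exact one_ne_zero hB00
    | (n+2), hA00, hB00 =>
    -- all later columns proportional to column (n+3)
    have key : ∀ d, (∃ l:ℂ, A (n+3+d) = l * A (n+3) ∧ B (n+3+d) = l * B (n+3)) ∧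
        (∃ l:ℂ, A (n+3+d+1) = l * A (n+3) ∧ B (n+3+d+1) = l * B (n+3)) := by
      intro d
      induction d with
      | zero =>
          constructor
          · exact ⟨1, by rw [one_mul], by rw [one_mul]⟩
          · refine ⟨b (n+3), ?_, ?_⟩
            · have h := hArec (n+2)
              rw [hA00, mul_zero, add_zero] at h
              exact h
            · have h := hBrec (n+2)
              rw [hB00, mul_zero, add_zero] at h
              exact h
      | succ d ih =>
          obtain ⟨⟨l1, hl1A, hl1B⟩, ⟨l2, hl2A, hl2B⟩⟩ := ih
          refine ⟨⟨l2, ?_, ?_⟩, ⟨b (n+3+d+1) * l2 + a (n+3+d+1) * l1, ?_, ?_⟩⟩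
          · have e : n+3+(d+1) = n+3+d+1 := by ring
            rw [e]; exact hl2A
          · have e : n+3+(d+1) = n+3+d+1 := by ring
            rw [e]; exact hl2B
          · have e : n+3+(d+1)+1 = (n+3+d)+2 := by ring
            rw [e, hArec (n+3+d), hl1A, hl2A]
            ring
          · have e : n+3+(d+1)+1 = (n+3+d)+2 := by ring
            rw [e, hBrec (n+3+d), hl1B, hl2B]
            ring
    have hrep : ∀ m, n+3 ≤ m → ∃ l:ℂ, A m = l * A (n+3) ∧ B m = l * B (n+3) := by
      intro m hm
      obtain ⟨l, hl⟩ := (key (m - (n+3))).1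
      rw [Nat.add_sub_cancel' hm] at hl
      exact ⟨l, hl⟩
    have huvals : ∀ m, n+3 ≤ m → A m / B m = 0 ∨ A m / B m = A (n+3) / B (n+3) := by
      intro m hm
      obtain ⟨l, hl1, hl2⟩ := hrep m hm
      by_cases hl : l = 0
      · left; rw [hl1, hl2, hl, zero_mul, zero_mul, zero_div]
      · right; rw [hl1, hl2, mul_div_mul_left _ _ hl]
    set cc := A (n+3) / B (n+3) with hccdef
    have hlim1 : f₁ = 0 ∨ f₁ = cc := by
      by_contra hcc
      push_neg at hcc
      obtain ⟨hd1, hd2⟩ := hcc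
      have hσ : 0 < min (Norm.norm f₁) (Norm.norm (f₁ - cc)) :=
        lt_min (norm_pos_iff.2 hd1) (norm_pos_iff.2 (sub_ne_zero.2 hd2))
      obtain ⟨N, hN⟩ := Metric.tendsto_atTop.1 hodd _ hσ
      have hm := hN (max N (n+3)) (le_max_left _ _)
      rw [Complex.dist_eq] at hm
      rcases huvals (2*(max N (n+3))+2) (by omega) with h | h
      · rw [h, zero_sub, norm_neg] at hm
        exact absurd (lt_of_lt_of_le hm (min_le_left _ _)) (lt_irrefl _)
      · rw [h, ← neg_sub, norm_neg] at hm
        exact absurd (lt_of_lt_of_le hm (min_le_right _ _)) (lt_irrefl _)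
    have hlim2 : f₂ = 0 ∨ f₂ = cc := by
      by_contra hcc
      push_neg at hcc
      obtain ⟨hd1, hd2⟩ := hcc
      have hσ : 0 < min (Norm.norm f₂) (Norm.norm (f₂ - cc)) :=
        lt_min (norm_pos_iff.2 hd1) (norm_pos_iff.2 (sub_ne_zero.2 hd2))
      obtain ⟨N, hN⟩ := Metric.tendsto_atTop.1 heven _ hσ
      have hm := hN (max N (n+3)) (le_max_left _ _)
      rw [Complex.dist_eq] at hm
      rcases huvals (2*(max N (n+3))+1) (by omega) with h | h
      · rw [h, zero_sub, norm_neg] at hm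
        exact absurd (lt_of_lt_of_le hm (min_le_left _ _)) (lt_irrefl _)
      · rw [h, ← neg_sub, norm_neg] at hm
        exact absurd (lt_of_lt_of_le hm (min_le_right _ _)) (lt_irrefl _)
    have hccne : cc ≠ 0 := by
      rcases hlim1 with h1 | h1 <;> rcases hlim2 with h2 | h2
      · exact absurd (h1.trans h2.symm) hne
      · intro hcz; rw [hcz] at h2; exact hne (h1.trans h2.symm)
      · intro hcz; rw [hcz] at h1; exact hne (h1.trans h2.symm)
      · exact absurd (h1.trans h2.symm) hne
    -- eventually u m equals its parity limit
    have heq : ∀ᶠ m in atTop, n+3 ≤ m ∧ A m / B m = (if Even m then f₁ else f₂) := by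
      have h1 := hup (Norm.norm cc) (norm_pos_iff.2 hccne)
      rw [eventually_atTop] at h1 ⊢
      obtain ⟨N, hN⟩ := h1
      refine ⟨max N (n+3), fun m hm => ⟨le_trans (le_max_right _ _) hm, ?_⟩⟩
      have h2 := hN m (le_trans (le_max_left _ _) hm)
      have h4 : (if Even m then f₁ else f₂) = 0 ∨ (if Even m then f₁ else f₂) = cc := by
        by_cases hp : Even m
        · rw [if_pos hp]; exact hlim1
        · rw [if_neg hp]; exact hlim2
      rcases huvals m (le_trans (le_max_right _ _) hm) with h | h <;> rcases h4 with h4 | h4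
      · rw [h, h4]
      · exfalso
        rw [h, h4, zero_sub, norm_neg] at h2
        exact absurd h2 (lt_irrefl _)
      · exfalso
        rw [h, h4, sub_zero] at h2
        exact absurd h2 (lt_irrefl _)
      · rw [h, h4]
    -- pick a big index where the parity value is 0
    have hzero_par : (0:ℂ) = f₁ ∨ (0:ℂ) = f₂ := by
      rcases hlim1 with h1 | h1
      · exact Or.inl h1.symm
      · rcases hlim2 with h2 | h2
        · exact Or.inr h2.symm
        · exact absurd (h1.trans h2.symm) hne
    rw [eventually_atTop] at heq
    obtain ⟨M, hM⟩ := heq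
    -- choose m ≥ M with (if Even m then f₁ else f₂) = 0
    obtain ⟨m, hmM, hfpm0⟩ : ∃ m, M ≤ m ∧ (if Even m then f₁ else f₂) = 0 := by
      rcases hzero_par with h | h
      · exact ⟨2*M, by omega, by rw [if_pos ⟨M, by ring⟩]; exact h.symm⟩
      · refine ⟨2*M+1, by omega, ?_⟩
        rw [if_neg]
        · exact h.symm
        · intro hcon2
          obtain ⟨r, hr⟩ := hcon2
          omega
    have hum : A m / B m = 0 := by
      have h := (hM m hmM).2
      rwa [hfpm0] at h
    have hum2 : A (m+2) / B (m+2) = 0 := by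
      have h := (hM (m+2) (by omega)).2
      have hpar : (if Even (m+2) then f₁ else f₂) = (if Even m then f₁ else f₂) := by
        by_cases hp : Even m
        · rw [if_pos hp, if_pos (by obtain ⟨r, hr⟩ := hp; exact ⟨r+1, by omega⟩)]
        · rw [if_neg hp, if_neg (by intro hc; obtain ⟨r, hr⟩ := hc; exact hp ⟨r-1, by omega⟩)]
      rw [hpar, hfpm0] at h
      exact h
    have hum1 : A (m+1) / B (m+1) = cc := by
      have h := (hM (m+1) (by omega)).2
      have hfp1 : (if Even (m+1) then f₁ else f₂) = cc := by
        by_cases hp : Even m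
        · rw [if_neg (fun hc => (Nat.even_add_one.1 hc) hp)]
          rcases hlim2 with h2 | h2
          · exfalso
            -- f₂ = 0 and f₁ = 0 (since fp m = f₁ = 0) contradicts hne
            rw [if_pos hp] at hfpm0
            exact hne (hfpm0.trans h2.symm)
          · exact h2
        · rw [if_pos (Nat.even_add_one.2 hp)]
          rcases hlim1 with h2 | h2
          · exfalso
            rw [if_neg hp] at hfpm0
            exact hne (h2.trans hfpm0.symm)
          · exact h2
      rw [hfp1] at h
      exact h
    -- column m is zero
    have hq_ne : B (n+3) ≠ 0 := by
      intro hq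
      rw [hccdef, hq, div_zero] at hccne
      exact hccne rfl
    obtain ⟨l, hlA, hlB⟩ := hrep m (hM m hmM).1
    have hl0 : l = 0 := by
      by_contra hl
      rw [hlA, hlB, mul_div_mul_left _ _ hl] at hum
      exact hccne hum
    have hAm : A m = 0 := by rw [hlA, hl0, zero_mul]
    have hBm : B m = 0 := by rw [hlB, hl0, zero_mul]
    -- then u (m+2) = u (m+1) = cc ≠ 0, contradiction
    have hA2 : A (m+2) = b (m+1) * A (m+1) := by
      rw [hArec m, hAm, mul_zero, add_zero]
    have hB2 : B (m+2) = b (m+1) * B (m+1) := by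
      rw [hBrec m, hBm, mul_zero, add_zero]
    rw [hA2, hB2, mul_div_mul_left _ _ (hbne (m+1) (by omega))] at hum2
    rw [hum2] at hum1
    exact hccne hum1.symm
  have hcolne : ∀ m, ((A m, B m) : ℂ × ℂ) ≠ 0 := by
    intro m hc
    rw [Prod.mk_eq_zero] at hc
    exact hcolAB m hc
  
  -- notation
  set nu : ℕ → ℝ := fun m => cnr (A m, B m) with hnudef
  have hnupos : ∀ m, 0 < nu m := fun m => cnr_pos (hcolne m)
  set T : ℕ → ℂ × ℂ := fun m => if B m = 0 then ((1:ℂ), 0)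
    else ((if Even m then f₁ else f₂), 1) with hTdef
  have hTne : ∀ m, T m ≠ 0 := by
    intro m
    rw [hTdef]
    by_cases hB : B m = 0 <;> simp [hB, Prod.ext_iff]
  set em : ℕ → ℝ := fun m => cdd (A m, B m) (T m) with hemdef
  have hemnn : ∀ m, 0 ≤ em m := fun m => cdd_nonneg _ _
  -- em is eventually small
  have he : ∀ σ : ℝ, 0 < σ → ∀ᶠ m in atTop, em m < σ := by
    intro σ hσ
    filter_upwards [hup σ hσ] with m hm
    show cdd (A m, B m) (T m) < σ
    by_cases hB : B m = 0
    · have hT : T m = ((1:ℂ), 0) := by rw [hTdef]; simp [hB]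
      have hw0 : wdg (A m, B m) ((1:ℂ), 0) = 0 := by
        simp [wdg, hB]
      simp only [hT, cdd, hw0, norm_zero, zero_div]
      exact hσ
    · have hT : T m = ((if Even m then f₁ else f₂), 1) := by rw [hTdef]; simp [hB]
      rw [hT]
      have hBA : B m * (A m / B m) = A m := by
        rw [mul_comm, div_mul_cancel₀ _ hB]
      have hw : wdg (A m, B m) ((if Even m then f₁ else f₂), 1)
          = B m * (A m / B m - (if Even m then f₁ else f₂)) := by
        simp only [wdg]
        rw [mul_sub, hBA, mul_one]
      rw [cdd, hw, norm_mul]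
      have hc1 : Norm.norm (B m) ≤ cnr (A m, B m) := abs_snd_le ((A m, B m) : ℂ × ℂ)
      have hc2 : 1 ≤ cnr ((if Even m then f₁ else f₂), 1) := one_le_cnr_pair _
      have hc3 : 0 < cnr (A m, B m) := cnr_pos (hcolne m)
      calc Norm.norm (B m) * Norm.norm (A m / B m - (if Even m then f₁ else f₂)) /
            (cnr (A m, B m) * cnr ((if Even m then f₁ else f₂), 1))
          ≤ Norm.norm (A m / B m - (if Even m then f₁ else f₂)) := by
            rw [div_le_iff₀ (by nlinarith)]
            have dnn := norm_nonneg (A m / B m - (if Even m then f₁ else f₂))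
            nlinarith [mul_le_mul_of_nonneg_right hc1 dnn,
              mul_le_mul_of_nonneg_left hc2 (mul_nonneg hc3.le dnn)]
        _ < σ := hm
  -- separation constants
  have hq1 : 0 < cdd ((f₁,1) : ℂ × ℂ) ((f₂,1) : ℂ × ℂ) := by
    apply cdd_pos (by simp [Prod.ext_iff]) (by simp [Prod.ext_iff])
    simp only [wdg]
    intro hcon
    apply hne
    have : f₁ - f₂ = 0 := by linear_combination hcon
    linear_combination this
  have hq2 : 0 < cdd ((f₁,1) : ℂ × ℂ) (((1:ℂ),0) : ℂ × ℂ) := by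
    apply cdd_pos (by simp [Prod.ext_iff]) (by simp [Prod.ext_iff])
    simp [wdg]
  have hq3 : 0 < cdd ((f₂,1) : ℂ × ℂ) (((1:ℂ),0) : ℂ × ℂ) := by
    apply cdd_pos (by simp [Prod.ext_iff]) (by simp [Prod.ext_iff])
    simp [wdg]
  set ρ := min (cdd ((f₁,1) : ℂ × ℂ) ((f₂,1) : ℂ × ℂ))
    (min (cdd ((f₁,1) : ℂ × ℂ) (((1:ℂ),0) : ℂ × ℂ))
      (cdd ((f₂,1) : ℂ × ℂ) (((1:ℂ),0) : ℂ × ℂ))) with hρdef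
  have hρpos : 0 < ρ := lt_min hq1 (lt_min hq2 hq3)
  set δ := ρ / 2 with hδdef
  have hδpos : 0 < δ := by rw [hδdef]; linarith
  -- consecutive target separation
  have hTsep : ∀ m, ρ ≤ cdd (T m) (T (m+1)) := by
    intro m
    by_cases hB : B m = 0 <;> by_cases hB' : B (m+1) = 0
    · exact absurd hB' (fun hc => hBcons m hB hc)
    · have e1 : T m = ((1:ℂ), 0) := by rw [hTdef]; simp [hB]
      have e2 : T (m+1) = ((if Even (m+1) then f₁ else f₂), 1) := by rw [hTdef]; simp [hB']
      rw [e1, e2, cdd_comm]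
      by_cases hp : Even (m+1)
      · rw [if_pos hp]
        exact le_trans (min_le_right _ _) (le_trans (min_le_left _ _) le_rfl)
      · rw [if_neg hp]
        exact le_trans (min_le_right _ _) (min_le_right _ _)
    · have e1 : T m = ((if Even m then f₁ else f₂), 1) := by rw [hTdef]; simp [hB]
      have e2 : T (m+1) = ((1:ℂ), 0) := by rw [hTdef]; simp [hB']
      rw [e1, e2]
      by_cases hp : Even m
      · rw [if_pos hp]
        exact le_trans (min_le_right _ _) (min_le_left _ _)
      · rw [if_neg hp]
        exact le_trans (min_le_right _ _) (min_le_right _ _)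
    · have e1 : T m = ((if Even m then f₁ else f₂), 1) := by rw [hTdef]; simp [hB]
      have e2 : T (m+1) = ((if Even (m+1) then f₁ else f₂), 1) := by rw [hTdef]; simp [hB']
      rw [e1, e2]
      by_cases hp : Even m
      · rw [if_pos hp, if_neg (fun hc => (Nat.even_add_one.1 hc) hp)]
        exact min_le_left _ _
      · rw [if_neg hp, if_pos (Nat.even_add_one.2 hp), cdd_comm]
        exact min_le_left _ _
  -- eventual separation of consecutive columns
  have hsep : ∀ᶠ m in atTop, δ ≤ cdd (A m, B m) (A (m+1), B (m+1)) := by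
    have hsh : ∀ᶠ m in atTop, em (m+1) < ρ/4 := by
      obtain ⟨N, hN⟩ := eventually_atTop.1 (he (ρ/4) (by linarith))
      exact eventually_atTop.2 ⟨N, fun m hm => hN (m+1) (by omega)⟩
    filter_upwards [he (ρ/4) (by linarith), hsh] with m h1 h2
    have tri1 : cdd (T m) (T (m+1)) ≤ cdd (T m) (A m, B m)
        + cdd (A m, B m) (T (m+1)) :=
      cdd_triangle (hTne m) (hcolne m) (hTne (m+1))
    have tri2 : cdd (A m, B m) (T (m+1)) ≤ cdd (A m, B m) (A (m+1), B (m+1))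
        + cdd (A (m+1), B (m+1)) (T (m+1)) :=
      cdd_triangle (hcolne m) (hcolne (m+1)) (hTne (m+1))
    have e1 : cdd (T m) (A m, B m) = em m := cdd_comm _ _
    have hTs := hTsep m
    rw [hemdef] at h1 h2
    rw [hemdef] at e1
    linarith [hTs, tri1, tri2, e1]
  -- lower bound for the determinant
  have hdetlow : ∀ᶠ m in atTop,
      δ * (nu m * nu (m+1)) ≤ Norm.norm (wdg (A m, B m) (A (m+1), B (m+1))) := by
    filter_upwards [hsep] with m hm
    have h := abs_wdg_eq (hcolne m) (hcolne (m+1))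
    rw [h]
    have := mul_le_mul_of_nonneg_right hm
      (le_of_lt (mul_pos (hnupos m) (hnupos (m+1))))
    exact this
  -- recurrence identities for wedges
  have hwb : ∀ m, wdg (A (m+2), B (m+2)) (A m, B m)
      = b (m+1) * wdg (A (m+1), B (m+1)) (A m, B m) := by
    intro m
    simp only [wdg, hArec, hBrec]
    ring
  -- (E5) one-step growth of column norms
  have hstep : ∀ᶠ m in atTop, c₁ * δ * nu (m+1) ≤ nu (m+2) := by
    filter_upwards [hdetlow] with m hm
    have h1 : c₁ * (δ * (nu m * nu (m+1)))
        ≤ Norm.norm (b (m+1)) * Norm.norm (wdg (A (m+1), B (m+1)) (A m, B m)) := by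
      have e1 : Norm.norm (wdg (A (m+1), B (m+1)) (A m, B m))
          = Norm.norm (wdg (A m, B m) (A (m+1), B (m+1))) := by
        rw [wdg_anticomm, norm_neg]
      rw [e1]
      have hbb := (hb (m+1) (by omega)).1
      have := norm_nonneg (wdg (A m, B m) (A (m+1), B (m+1)))
      nlinarith [mul_pos (hnupos m) (hnupos (m+1)), hδpos]
    have h2 : Norm.norm (b (m+1)) * Norm.norm (wdg (A (m+1), B (m+1)) (A m, B m))
        = Norm.norm (wdg (A (m+2), B (m+2)) (A m, B m)) := by
      rw [hwb m, norm_mul]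
    have h3 : Norm.norm (wdg (A (m+2), B (m+2)) (A m, B m)) ≤ nu (m+2) * nu m :=
      abs_wdg_le _ _
    have h4 : c₁ * (δ * (nu m * nu (m+1))) ≤ nu (m+2) * nu m := by linarith
    have := hnupos m
    nlinarith [h4]
  -- (E6) star inequality off the junk set
  have hstar : ∀ᶠ m in atTop, B m ≠ 0 → B (m+2) ≠ 0 →
      c₁ * δ * nu (m+1) ≤ nu (m+2) * (em m + em (m+2)) := by
    filter_upwards [hdetlow] with m hm hB hB2
    have hTm : T m = ((if Even m then f₁ else f₂), 1) := by rw [hTdef]; simp [hB]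
    have hTm2 : T (m+2) = ((if Even m then f₁ else f₂), 1) := by
      have hpar : (if Even (m+2) then f₁ else f₂) = (if Even m then f₁ else f₂) := by
        by_cases hp : Even m
        · rw [if_pos hp, if_pos (by obtain ⟨r, hr⟩ := hp; exact ⟨r+1, by omega⟩)]
        · rw [if_neg hp, if_neg (by intro hc; obtain ⟨r, hr⟩ := hc; exact hp ⟨r-1, by omega⟩)]
      show (if B (m+2) = 0 then ((1:ℂ), 0) else ((if Even (m+2) then f₁ else f₂), 1)) = _
      rw [if_neg hB2, hpar]
    have tri : cdd (A (m+2), B (m+2)) (A m, B m) ≤ em (m+2) + em m := by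
      have t1 : cdd (A (m+2), B (m+2)) (A m, B m)
          ≤ cdd (A (m+2), B (m+2)) (T m) + cdd (T m) (A m, B m) :=
        cdd_triangle (hcolne (m+2)) (hTne m) (hcolne m)
      have e1 : cdd (A (m+2), B (m+2)) (T m) = em (m+2) := by
        show _ = cdd (A (m+2), B (m+2)) (T (m+2))
        rw [hTm, hTm2]
      have e2 : cdd (T m) (A m, B m) = em m := cdd_comm _ _
      linarith [t1, e1.le, e2.le]
    have h1 : c₁ * (δ * (nu m * nu (m+1)))
        ≤ Norm.norm (wdg (A (m+2), B (m+2)) (A m, B m)) := by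
      have e1 : Norm.norm (wdg (A (m+1), B (m+1)) (A m, B m))
          = Norm.norm (wdg (A m, B m) (A (m+1), B (m+1))) := by
        rw [wdg_anticomm, norm_neg]
      rw [← (by rw [hwb m, norm_mul] :
        Norm.norm (b (m+1)) * Norm.norm (wdg (A (m+1), B (m+1)) (A m, B m))
          = Norm.norm (wdg (A (m+2), B (m+2)) (A m, B m)))]
      rw [e1]
      have hbb := (hb (m+1) (by omega)).1
      have := norm_nonneg (wdg (A m, B m) (A (m+1), B (m+1)))
      nlinarith [mul_pos (hnupos m) (hnupos (m+1)), hδpos]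
    have h2 : Norm.norm (wdg (A (m+2), B (m+2)) (A m, B m))
        = cdd (A (m+2), B (m+2)) (A m, B m) * (nu (m+2) * nu m) :=
      abs_wdg_eq (hcolne (m+2)) (hcolne m)
    have h3 : c₁ * (δ * (nu m * nu (m+1))) ≤ (em (m+2) + em m) * (nu (m+2) * nu m) := by
      rw [h2] at h1
      nlinarith [mul_pos (hnupos (m+2)) (hnupos m), tri,
        cdd_nonneg ((A (m+2), B (m+2)) : ℂ × ℂ) ((A m, B m) : ℂ × ℂ)]
    have h4 := hnupos m
    nlinarith [h3]
  -- separation of the two general-convergence sequences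
  have hbddbelow : IsBoundedUnder (· ≥ ·) atTop (fun n => sph (v n) (w n)) := by
    refine ⟨0, ?_⟩
    rw [eventually_map]
    refine Eventually.of_forall fun n => ?_
    rw [sph_eq_cdd]
    exact cdd_nonneg _ _
  set ε := liminf (fun n => sph (v n) (w n)) atTop / 2 with hεdef
  have hεpos : 0 < ε := by rw [hεdef]; linarith
  have hεv : ∀ᶠ n in atTop, ε ≤ cdd (rep (v n)) (rep (w n)) := by
    have h := eventually_lt_of_lt_liminf
      (show ε < liminf (fun n => sph (v n) (w n)) atTop by rw [hεdef]; linarith) hbddbelow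
    refine h.mono fun n hn => ?_
    rw [← sph_eq_cdd]
    exact hn.le
  -- image sequences
  set Pv : ℕ → ℂ × ℂ := fun n => Mv A B n (rep (v n)) with hPvdef
  set Pw : ℕ → ℂ × ℂ := fun n => Mv A B n (rep (w n)) with hPwdef
  have hvM : TendstoSphere (fun n => (Pv n).1 / (Pv n).2) f := by
    have e : (fun n => Sval (A (n+1)) (B (n+1)) (A n) (B n) (v n))
        = fun n => (Pv n).1 / (Pv n).2 := funext fun n => Sval_eq_Mv A B n (v n)
    exact e ▸ hv
  have hwM : TendstoSphere (fun n => (Pw n).1 / (Pw n).2) f := by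
    have e : (fun n => Sval (A (n+1)) (B (n+1)) (A n) (B n) (w n))
        = fun n => (Pw n).1 / (Pw n).2 := funext fun n => Sval_eq_Mv A B n (w n)
    exact e ▸ hw
  set DDv : ℕ → ℝ := fun n => cdd (Pv n) (rep f) * cdd (Pv n) ((1:ℂ), 0) with hDDvdef
  set DDw : ℕ → ℝ := fun n => cdd (Pw n) (rep f) * cdd (Pw n) ((1:ℂ), 0) with hDDwdef
  have hDDv : Tendsto DDv atTop (nhds 0) := tend_dd Pv f hvM
  have hDDw : Tendsto DDw atTop (nhds 0) := tend_dd Pw f hwM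
  have hDDvnn : ∀ n, 0 ≤ DDv n := fun n => mul_nonneg (cdd_nonneg _ _) (cdd_nonneg _ _)
  have hDDwnn : ∀ n, 0 ≤ DDw n := fun n => mul_nonneg (cdd_nonneg _ _) (cdd_nonneg _ _)
  -- nonvanishing of image vectors
  have hPne : ∀ᶠ n in atTop, Pv n ≠ 0 ∧ Pw n ≠ 0 := by
    filter_upwards [hεv, hdetlow] with n hε_n hdet_n
    have hwdg : 0 < Norm.norm (wdg (Pv n) (Pw n)) := by
      have e : wdg (Pv n) (Pw n)
          = wdg (A n, B n) (A (n+1), B (n+1)) * wdg (rep (v n)) (rep (w n)) :=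
        wdg_Mv A B n (rep (v n)) (rep (w n))
      rw [e, norm_mul]
      apply mul_pos
      · exact lt_of_lt_of_le (mul_pos hδpos (mul_pos (hnupos n) (hnupos (n+1)))) hdet_n
      · have h := abs_wdg_eq (rep_ne (v n)) (rep_ne (w n))
        rw [h]
        have p1 := cnr_pos (rep_ne (v n))
        have p2 := cnr_pos (rep_ne (w n))
        exact mul_pos (lt_of_lt_of_le hεpos hε_n) (mul_pos p1 p2)
    constructor
    · intro hc
      rw [hc, wdg_zero_left, norm_zero] at hwdg
      exact lt_irrefl _ hwdg
    · intro hc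
      rw [hc, wdg_zero_right, norm_zero] at hwdg
      exact lt_irrefl _ hwdg
  -- the key distortion estimate
  have hG1 : ∀ᶠ n in atTop,
      min (cdd (T (n+1)) (rep f)) (cdd (T (n+1)) ((1:ℂ), 0))
        ≤ em (n+1) + 2/(δ*ε) * (nu n / nu (n+1)) + Real.sqrt (DDv n + DDw n) := by
    filter_upwards [hεv, hdetlow] with n hε_n hdet_n
    have hεabs : ε * (cnr (rep (v n)) * cnr (rep (w n)))
        ≤ Norm.norm (wdg (rep (v n)) (rep (w n))) := by
      rw [abs_wdg_eq (rep_ne (v n)) (rep_ne (w n))]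
      exact mul_le_mul_of_nonneg_right hε_n
        (mul_nonneg (cnr_nonneg _) (cnr_nonneg _))
    obtain ⟨Z, hZne, hZ2, hDZ⟩ : ∃ Z : ℂ × ℂ, Z ≠ 0 ∧ ε/2 * cnr Z ≤ Norm.norm Z.2 ∧
        cdd (Mv A B n Z) (rep f) * cdd (Mv A B n Z) ((1:ℂ), 0) ≤ DDv n + DDw n := by
      by_cases hchoice : ε/2 * cnr (rep (v n)) ≤ Norm.norm (rep (v n)).2
      · exact ⟨rep (v n), rep_ne _, hchoice, le_add_of_nonneg_right (hDDwnn n)⟩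
      · refine ⟨rep (w n), rep_ne _, ?_, le_add_of_nonneg_left (hDDvnn n)⟩
        by_contra hcon2
        push_neg at hcon2 hchoice
        have habs : Norm.norm (wdg (rep (v n)) (rep (w n))) ≤
            Norm.norm (rep (v n)).1 * Norm.norm (rep (w n)).2
            + Norm.norm (rep (v n)).2 * Norm.norm (rep (w n)).1 := by
          have h := norm_add_le ((rep (v n)).1 * (rep (w n)).2)
            (-((rep (v n)).2 * (rep (w n)).1))
          rw [← sub_eq_add_neg, norm_neg, norm_mul, norm_mul] at h
          exact h
        have p1 := cnr_pos (rep_ne (v n))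
        have p2 := cnr_pos (rep_ne (w n))
        have k1 : Norm.norm (rep (v n)).1 * Norm.norm (rep (w n)).2
            ≤ cnr (rep (v n)) * Norm.norm (rep (w n)).2 :=
          mul_le_mul_of_nonneg_right (abs_fst_le _) (norm_nonneg _)
        have k2 : cnr (rep (v n)) * Norm.norm (rep (w n)).2
            < cnr (rep (v n)) * (ε/2 * cnr (rep (w n))) :=
          mul_lt_mul_of_pos_left hcon2 p1
        have k3 : Norm.norm (rep (v n)).2 * Norm.norm (rep (w n)).1
            ≤ Norm.norm (rep (v n)).2 * cnr (rep (w n)) :=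
          mul_le_mul_of_nonneg_left (abs_fst_le _) (norm_nonneg _)
        have k4 : Norm.norm (rep (v n)).2 * cnr (rep (w n))
            < (ε/2 * cnr (rep (v n))) * cnr (rep (w n)) :=
          mul_lt_mul_of_pos_right hchoice p2
        nlinarith [hεabs, habs]
    have hZpos : 0 < cnr Z := cnr_pos hZne
    -- lower bound for the norm of the image of Z
    have hw1 : wdg (Mv A B n Z) (A n, B n)
        = wdg (A n, B n) (A (n+1), B (n+1)) * (- Z.2) := by
      have h := wdg_Mv A B n Z ((1:ℂ), 0)
      rw [Mv_inf] at h
      rw [h]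
      congr 1
      simp [wdg]
    have hPlow : δ * (ε/2) * (nu (n+1) * cnr Z) ≤ cnr (Mv A B n Z) := by
      have h1 : Norm.norm (wdg (Mv A B n Z) (A n, B n)) ≤ cnr (Mv A B n Z) * nu n :=
        abs_wdg_le (Mv A B n Z) ((A n, B n) : ℂ × ℂ)
      have h2 : Norm.norm (wdg (Mv A B n Z) (A n, B n))
          = Norm.norm (wdg (A n, B n) (A (n+1), B (n+1))) * Norm.norm Z.2 := by
        rw [hw1, norm_mul, norm_neg]
      rw [h2] at h1
      have h3 : δ * (nu n * nu (n+1)) * (ε/2 * cnr Z)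
          ≤ cnr (Mv A B n Z) * nu n := by
        calc δ * (nu n * nu (n+1)) * (ε/2 * cnr Z)
            ≤ Norm.norm (wdg (A n, B n) (A (n+1), B (n+1))) * (ε/2 * cnr Z) :=
              mul_le_mul_of_nonneg_right hdet_n
                (mul_nonneg (by linarith) hZpos.le)
          _ ≤ Norm.norm (wdg (A n, B n) (A (n+1), B (n+1))) * Norm.norm Z.2 :=
              mul_le_mul_of_nonneg_left hZ2 (norm_nonneg _)
          _ ≤ cnr (Mv A B n Z) * nu n := h1
      have h5 : (δ * (ε/2) * (nu (n+1) * cnr Z)) * nu n ≤ cnr (Mv A B n Z) * nu n := by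
        calc (δ * (ε/2) * (nu (n+1) * cnr Z)) * nu n
            = δ * (nu n * nu (n+1)) * (ε/2 * cnr Z) := by ring
          _ ≤ cnr (Mv A B n Z) * nu n := h3
      exact le_of_mul_le_mul_right h5 (hnupos n)
    have hPpos : 0 < cnr (Mv A B n Z) := by
      apply lt_of_lt_of_le _ hPlow
      have h6 : 0 < ε/2 := by linarith
      exact mul_pos (mul_pos hδpos h6) (mul_pos (hnupos (n+1)) hZpos)
    have hPne' : Mv A B n Z ≠ 0 := by
      intro hc
      rw [hc, cnr_zero] at hPpos
      exact lt_irrefl _ hPpos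
    -- middle distance estimate
    have hw2 : wdg (A (n+1), B (n+1)) (Mv A B n Z)
        = wdg (A n, B n) (A (n+1), B (n+1)) * (- Z.1) := by
      have h := wdg_Mv A B n ((0:ℂ), 1) Z
      rw [Mv_zero] at h
      rw [h]
      congr 1
      simp [wdg]
    have hmid : cdd (A (n+1), B (n+1)) (Mv A B n Z) ≤ 2/(δ*ε) * (nu n / nu (n+1)) := by
      have hnum : Norm.norm (wdg (A (n+1), B (n+1)) (Mv A B n Z))
          ≤ (nu n * nu (n+1)) * cnr Z := by
        rw [hw2, norm_mul, norm_neg]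
        have j1 : Norm.norm (wdg (A n, B n) (A (n+1), B (n+1))) ≤ nu n * nu (n+1) :=
          abs_wdg_le ((A n, B n) : ℂ × ℂ) ((A (n+1), B (n+1)) : ℂ × ℂ)
        have j2 : Norm.norm Z.1 ≤ cnr Z := abs_fst_le Z
        nlinarith [norm_nonneg (wdg (A n, B n) (A (n+1), B (n+1))),
          norm_nonneg Z.1, cnr_nonneg Z, mul_pos (hnupos n) (hnupos (n+1))]
      have hden : nu (n+1) * (δ * (ε/2) * (nu (n+1) * cnr Z))
          ≤ nu (n+1) * cnr (Mv A B n Z) :=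
        mul_le_mul_of_nonneg_left hPlow (hnupos (n+1)).le
      have e1 : cnr (A (n+1), B (n+1)) = nu (n+1) := rfl
      rw [cdd, e1]
      calc Norm.norm (wdg (A (n+1), B (n+1)) (Mv A B n Z)) / (nu (n+1) * cnr (Mv A B n Z))
          ≤ ((nu n * nu (n+1)) * cnr Z) / (nu (n+1) * (δ * (ε/2) * (nu (n+1) * cnr Z))) := by
            apply div_le_div₀ (mul_nonneg (mul_nonneg (hnupos n).le (hnupos (n+1)).le) hZpos.le) hnum _ hden
            have h6 : 0 < ε/2 := by linarith
            exact mul_pos (hnupos (n+1)) (mul_pos (mul_pos hδpos h6) (mul_pos (hnupos (n+1)) hZpos))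
        _ = 2/(δ*ε) * (nu n / nu (n+1)) := by
            have d1 := (hnupos (n+1)).ne'
            have d2 := hδpos.ne'
            have d3 := hεpos.ne'
            have d4 := hZpos.ne'
            field_simp
    -- image of Z is close to {f, ∞}
    have hminsq : min (cdd (Mv A B n Z) (rep f)) (cdd (Mv A B n Z) ((1:ℂ), 0))
        ≤ Real.sqrt (DDv n + DDw n) := by
      have hnn : 0 ≤ min (cdd (Mv A B n Z) (rep f)) (cdd (Mv A B n Z) ((1:ℂ), 0)) :=
        le_min (cdd_nonneg _ _) (cdd_nonneg _ _)
      rw [Real.le_sqrt hnn (add_nonneg (hDDvnn n) (hDDwnn n))]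
      calc min (cdd (Mv A B n Z) (rep f)) (cdd (Mv A B n Z) ((1:ℂ), 0)) ^ 2
          = min (cdd (Mv A B n Z) (rep f)) (cdd (Mv A B n Z) ((1:ℂ), 0))
            * min (cdd (Mv A B n Z) (rep f)) (cdd (Mv A B n Z) ((1:ℂ), 0)) := sq _
        _ ≤ cdd (Mv A B n Z) (rep f) * cdd (Mv A B n Z) ((1:ℂ), 0) :=
            mul_le_mul (min_le_left _ _) (min_le_right _ _) hnn (cdd_nonneg _ _)
        _ ≤ DDv n + DDw n := hDZ
    -- triangle chains
    have e2 : cdd (T (n+1)) (A (n+1), B (n+1)) = em (n+1) := cdd_comm _ _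
    have tri0 : ∀ τ : ℂ × ℂ, τ ≠ 0 → cdd (T (n+1)) τ
        ≤ em (n+1) + 2/(δ*ε) * (nu n / nu (n+1)) + cdd (Mv A B n Z) τ := by
      intro τ hτ
      have t1 : cdd (T (n+1)) τ ≤ cdd (T (n+1)) (A (n+1), B (n+1))
          + cdd (A (n+1), B (n+1)) τ :=
        cdd_triangle (hTne (n+1)) (hcolne (n+1)) hτ
      have t2 : cdd (A (n+1), B (n+1)) τ ≤ cdd (A (n+1), B (n+1)) (Mv A B n Z)
          + cdd (Mv A B n Z) τ :=
        cdd_triangle (hcolne (n+1)) hPne' hτ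
      rw [e2] at t1
      linarith [t1, t2, hmid]
    rcases le_total (cdd (Mv A B n Z) (rep f)) (cdd (Mv A B n Z) ((1:ℂ), 0)) with hc | hc
    · have h7 := tri0 (rep f) (rep_ne f)
      have h8 : min (cdd (Mv A B n Z) (rep f)) (cdd (Mv A B n Z) ((1:ℂ), 0))
          = cdd (Mv A B n Z) (rep f) := min_eq_left hc
      rw [h8] at hminsq
      calc min (cdd (T (n+1)) (rep f)) (cdd (T (n+1)) ((1:ℂ), 0))
          ≤ cdd (T (n+1)) (rep f) := min_le_left _ _
        _ ≤ em (n+1) + 2/(δ*ε) * (nu n / nu (n+1)) + cdd (Mv A B n Z) (rep f) := h7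
        _ ≤ em (n+1) + 2/(δ*ε) * (nu n / nu (n+1)) + Real.sqrt (DDv n + DDw n) := by
            linarith [hminsq]
    · have h7 := tri0 ((1:ℂ), 0) (by simp [Prod.ext_iff])
      have h8 : min (cdd (Mv A B n Z) (rep f)) (cdd (Mv A B n Z) ((1:ℂ), 0))
          = cdd (Mv A B n Z) ((1:ℂ), 0) := min_eq_right hc
      rw [h8] at hminsq
      calc min (cdd (T (n+1)) (rep f)) (cdd (T (n+1)) ((1:ℂ), 0))
          ≤ cdd (T (n+1)) ((1:ℂ), 0) := min_le_right _ _
        _ ≤ em (n+1) + 2/(δ*ε) * (nu n / nu (n+1)) + cdd (Mv A B n Z) ((1:ℂ), 0) := h7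
        _ ≤ em (n+1) + 2/(δ*ε) * (nu n / nu (n+1)) + Real.sqrt (DDv n + DDw n) := by
            linarith [hminsq]

  -- shifting helpers
  have hshift : ∀ (Q : ℕ → Prop), (∀ᶠ m in atTop, Q m) → ∀ᶠ m in atTop, Q (m+1) := by
    intro Q hQ
    rw [eventually_atTop] at hQ ⊢
    obtain ⟨N, hN⟩ := hQ
    exact ⟨N, fun m hm => hN (m+1) (by omega)⟩
  have hfreq_shift : ∀ (Q R : ℕ → Prop), (∃ᶠ m in atTop, Q m) → (∀ m, Q m → R (m+1)) →
      (∃ᶠ m in atTop, R m) := by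
    intro Q R hQ hQR
    rw [frequently_atTop] at hQ ⊢
    intro N
    obtain ⟨m, hm, hQm⟩ := hQ N
    exact ⟨m+1, by omega, hQR m hQm⟩
  -- the square-root term is eventually small
  have hsqrt : ∀ σ : ℝ, 0 < σ → ∀ᶠ n in atTop, Real.sqrt (DDv n + DDw n) < σ := by
    intro σ hσ
    have h := hDDv.add hDDw
    rw [add_zero] at h
    have h2 := h.eventually_lt_const (show (0:ℝ) < σ^2 by positivity)
    filter_upwards [h2] with n hn
    exact (Real.sqrt_lt' hσ).2 hn
  -- smallness of the min, given a ratio bound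
  have small_of_rat : ∀ (Q : ℕ → Prop),
      (∀ σ : ℝ, 0 < σ → ∀ᶠ m in atTop, Q m → nu (m+1) < σ * nu (m+2)) →
      ∀ σ : ℝ, 0 < σ → ∀ᶠ m in atTop, Q m →
        min (cdd (T (m+2)) (rep f)) (cdd (T (m+2)) ((1:ℂ), 0)) < σ := by
    intro Q hQ σ hσ
    have hG1' : ∀ᶠ m in atTop,
        min (cdd (T (m+2)) (rep f)) (cdd (T (m+2)) ((1:ℂ), 0))
          ≤ em (m+2) + 2/(δ*ε) * (nu (m+1) / nu (m+2)) + Real.sqrt (DDv (m+1) + DDw (m+1)) :=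
      hshift _ hG1
    have hc : (0:ℝ) < σ/3 * (δ*ε) / 2 :=
      div_pos (mul_pos (by linarith) (mul_pos hδpos hεpos)) two_pos
    have hratv : ∀ᶠ m in atTop, Q m → 2/(δ*ε) * (nu (m+1) / nu (m+2)) < σ/3 := by
      filter_upwards [hQ (σ/3 * (δ*ε) / 2) hc] with m hm hQm
      have h1 := hm hQm
      have h2 : nu (m+1)/nu (m+2) < σ/3 * (δ*ε)/2 := (div_lt_iff₀ (hnupos (m+2))).2 h1
      have h3 : (0:ℝ) < 2/(δ*ε) := div_pos two_pos (mul_pos hδpos hεpos)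
      have h4 := mul_lt_mul_of_pos_left h2 h3
      have h5 : 2/(δ*ε) * (σ/3 * (δ*ε)/2) = σ/3 := by
        field_simp
      rwa [h5] at h4
    have hem2 : ∀ᶠ m in atTop, em (m+2) < σ/3 :=
      hshift _ (hshift _ (he (σ/3) (by linarith)))
    have hsq1 : ∀ᶠ m in atTop, Real.sqrt (DDv (m+1) + DDw (m+1)) < σ/3 :=
      hshift _ (hsqrt (σ/3) (by linarith))
    filter_upwards [hG1', hratv, hem2, hsq1] with m h1 h2 h3 h4
    intro hQm
    have h5 := h2 hQm
    linarith
  -- a pinning device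
  have pin0 : ∀ (z : ℂ) (Q : ℕ → Prop), (∃ᶠ m in atTop, Q m) →
      (∀ᶠ m in atTop, Q m → T (m+2) = ((z:ℂ), 1)) →
      (∀ σ : ℝ, 0 < σ → ∀ᶠ m in atTop, Q m →
        min (cdd (T (m+2)) (rep f)) (cdd (T (m+2)) ((1:ℂ), 0)) < σ) →
      cdd (((z:ℂ), 1) : ℂ × ℂ) (rep f) = 0 := by
    intro z Q hfq hTz hsm
    have harm2 : 0 < cdd (((z:ℂ),1) : ℂ × ℂ) ((1:ℂ), 0) := by
      apply cdd_pos (by simp [Prod.ext_iff]) (by simp [Prod.ext_iff])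
      show z * 0 - 1 * 1 ≠ 0
      simp
    by_contra hccc
    have hpos : 0 < cdd (((z:ℂ),1) : ℂ × ℂ) (rep f) :=
      lt_of_le_of_ne (cdd_nonneg _ _) (Ne.symm hccc)
    have hσ : 0 < min (cdd (((z:ℂ),1) : ℂ × ℂ) (rep f)) (cdd (((z:ℂ),1) : ℂ × ℂ) ((1:ℂ), 0)) :=
      lt_min hpos harm2
    obtain ⟨m, hQm, hsm', hTz'⟩ := (hfq.and_eventually ((hsm _ hσ).and hTz)).exists
    have h := hsm' hQm
    rw [hTz' hQm] at h
    exact lt_irrefl _ h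
  have pin1 : ∀ z : ℂ, cdd (((z:ℂ), 1) : ℂ × ℂ) (rep f) = 0 → f = some z := by
    intro z hz
    cases hf' : f with
    | none =>
        exfalso
        rw [hf'] at hz
        have h : 0 < cdd (((z:ℂ),1) : ℂ × ℂ) (rep none) := by
          apply cdd_pos (by simp [Prod.ext_iff]) (rep_ne none)
          show z * 0 - 1 * 1 ≠ 0
          simp
        rw [hz] at h
        exact lt_irrefl _ h
    | some L =>
        rw [hf'] at hz
        have hd : 0 < cnr (((z:ℂ),1) : ℂ × ℂ) * cnr (rep (some L)) :=
          mul_pos (cnr_pos (by simp [Prod.ext_iff])) (cnr_pos (rep_ne _))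
        rw [cdd, div_eq_zero_iff] at hz
        rcases hz with hz | hz
        · have h0 : wdg (((z:ℂ),1) : ℂ × ℂ) (rep (some L)) = 0 := by
            exact norm_eq_zero.1 hz
          have e : wdg (((z:ℂ),1) : ℂ × ℂ) (rep (some L)) = z - L := by
            show z * 1 - 1 * L = z - L
            ring
          rw [e] at h0
          exact congrArg some (sub_eq_zero.1 h0).symm
        · exact absurd hz (ne_of_gt hd)
  -- the core contradiction for the junk cases
  have core : ∀ (P : ℕ → Prop) (φ : ℂ), φ ≠ 0 →
      (∀ m, P m ↔ P (m+2)) →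
      (∀ m, P (m+1) ↔ ¬ P m) →
      (∀ m, P m → (if Even m then f₁ else f₂) = 0) →
      (∀ m, ¬ P m → (if Even m then f₁ else f₂) = φ) →
      (∃ᶠ m in atTop, P m ∧ B m = 0) →
      (∀ᶠ m in atTop, B m = 0 → P m) → False := by
    intro P φ hφ hP2 hPalt hfpz hfpφ hfreq hjunk
    have hBP : ∀ᶠ m in atTop, ¬ P m → B m ≠ 0 :=
      hjunk.mono fun m hm hPm hB0 => hPm (hm hB0)
    have hTφ : ∀ᶠ m in atTop, ¬ P m → T m = ((φ:ℂ), 1) := by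
      filter_upwards [hBP] with m h1 h2
      have hB := h1 h2
      show (if B m = 0 then ((1:ℂ),0) else ((if Even m then f₁ else f₂), 1)) = _
      rw [if_neg hB, hfpφ m h2]
    have hrat1 : ∀ σ : ℝ, 0 < σ → ∀ᶠ m in atTop, ¬ P m → nu (m+1) < σ * nu (m+2) := by
      intro σ hσ
      have hσ4 : (0:ℝ) < σ * (c₁*δ) / 4 :=
        div_pos (mul_pos hσ (mul_pos hc₁ hδpos)) four_pos
      filter_upwards [hstar, hBP, hshift _ (hshift _ hBP), he (σ*(c₁*δ)/4) hσ4,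
        hshift _ (hshift _ (he (σ*(c₁*δ)/4) hσ4))] with m h1 h2 h3 h4 h5
      intro hPm
      have hB1 : B m ≠ 0 := h2 hPm
      have hB2 : B (m+2) ≠ 0 := h3 (fun hc => hPm ((hP2 m).2 hc))
      have h6 := h1 hB1 hB2
      have h7 : em m + em (m+2) < σ * (c₁*δ) / 2 := by linarith
      have h8 := mul_lt_mul_of_pos_left h7 (hnupos (m+2))
      nlinarith [hnupos (m+1), hnupos (m+2), mul_pos hc₁ hδpos, h6, h8, hσ]
    have hsm1 := small_of_rat (fun m => ¬ P m) hrat1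
    have hTz1 : ∀ᶠ m in atTop, ¬ P m → T (m+2) = ((φ:ℂ), 1) := by
      filter_upwards [hshift _ (hshift _ hTφ)] with m h1 h2
      exact h1 (fun hc => h2 ((hP2 m).2 hc))
    have hfreqnP : ∃ᶠ m in atTop, ¬ P m := by
      apply hfreq_shift (fun m => P m) _ (hfreq.mono fun m hm => hm.1)
      intro m hm hc
      exact ((hPalt m).1 hc) hm
    have hf : f = some φ := pin1 φ (pin0 φ (fun m => ¬ P m) hfreqnP hTz1 hsm1)
    rw [hf] at hvM hwM
    have hPvd := tend_dd1 Pv φ hφ (TS_some hvM)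
    have hPwd := tend_dd1 Pw φ hφ (TS_some hwM)
    -- global ratio smallness from general convergence
    have hrat2 : ∀ σ : ℝ, 0 < σ → ∀ᶠ n in atTop, nu n < σ * nu (n+1) := by
      intro σ hσ
      have hdxyb : ∀ᶠ n in atTop, cdd (Pv n) (Pw n)
          ≤ cdd (Pv n) (((φ:ℂ),1) : ℂ × ℂ) + cdd (Pw n) (((φ:ℂ),1) : ℂ × ℂ) := by
        filter_upwards [hPne] with n hn
        have t := cdd_triangle hn.1 (show (((φ:ℂ),1):ℂ × ℂ) ≠ 0 by simp [Prod.ext_iff]) hn.2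
        have e := cdd_comm (((φ:ℂ),1) : ℂ × ℂ) (Pw n)
        linarith [t]
      set K := 1/(c₁*δ) + 1 with hKdef
      have hKpos : 0 < K := by
        rw [hKdef]
        have h9 := mul_pos hc₁ hδpos
        positivity
      set σ' := σ * (δ*ε) / (K^2) with hσ'def
      have hσ'pos : 0 < σ' := by
        rw [hσ'def]
        exact div_pos (mul_pos hσ (mul_pos hδpos hεpos)) (pow_pos hKpos 2)
      have hdxysmall : ∀ᶠ n in atTop,
          cdd (Pv n) (((φ:ℂ),1):ℂ × ℂ) + cdd (Pw n) (((φ:ℂ),1):ℂ × ℂ) < σ' := by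
        have h := hPvd.add hPwd
        rw [add_zero] at h
        exact h.eventually_lt_const hσ'pos
      have hstep' : ∀ᶠ n in atTop, c₁ * δ * nu n ≤ nu (n+1) := by
        rw [eventually_atTop] at hstep ⊢
        obtain ⟨N, hN⟩ := hstep
        refine ⟨N+1, fun n hn => ?_⟩
        have h9 := hN (n-1) (by omega)
        have e1 : n-1+1 = n := by omega
        have e2 : n-1+2 = n+1 := by omega
        rwa [e1, e2] at h9
      filter_upwards [hεv, hdetlow, hdxyb, hdxysmall, hstep', hPne] with n h1 h2 h3 h4 h5 h6
      have hX := cnr_pos (rep_ne (v n))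
      have hY := cnr_pos (rep_ne (w n))
      have hi : ε * (cnr (rep (v n)) * cnr (rep (w n)))
          ≤ Norm.norm (wdg (rep (v n)) (rep (w n))) := by
        rw [abs_wdg_eq (rep_ne (v n)) (rep_ne (w n))]
        exact mul_le_mul_of_nonneg_right h1 (mul_nonneg hX.le hY.le)
      have hii : Norm.norm (wdg (Pv n) (Pw n))
          = Norm.norm (wdg (A n, B n) (A (n+1), B (n+1)))
            * Norm.norm (wdg (rep (v n)) (rep (w n))) := by
        show Norm.norm (wdg (Mv A B n (rep (v n))) (Mv A B n (rep (w n)))) = _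
        rw [wdg_Mv, norm_mul]
      have hiii : Norm.norm (wdg (Pv n) (Pw n))
          = cdd (Pv n) (Pw n) * (cnr (Pv n) * cnr (Pw n)) := abs_wdg_eq h6.1 h6.2
      have hiv : cnr (Pv n) ≤ (nu n + nu (n+1)) * cnr (rep (v n)) := cnr_Mv_le A B n (rep (v n))
      have hiv' : cnr (Pw n) ≤ (nu n + nu (n+1)) * cnr (rep (w n)) := cnr_Mv_le A B n (rep (w n))
      have hdxy : cdd (Pv n) (Pw n) < σ' := lt_of_le_of_lt h3 h4
      have hv5 : (δ * (nu n * nu (n+1)) * ε) * (cnr (rep (v n)) * cnr (rep (w n)))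
          ≤ (cdd (Pv n) (Pw n) * ((nu n + nu (n+1))^2)) * (cnr (rep (v n)) * cnr (rep (w n))) := by
        have step1 : (δ * (nu n * nu (n+1)) * ε) * (cnr (rep (v n)) * cnr (rep (w n)))
            = δ * (nu n * nu (n+1)) * (ε * (cnr (rep (v n)) * cnr (rep (w n)))) := by ring
        rw [step1]
        calc δ * (nu n * nu (n+1)) * (ε * (cnr (rep (v n)) * cnr (rep (w n))))
            ≤ Norm.norm (wdg (A n, B n) (A (n+1), B (n+1)))
              * Norm.norm (wdg (rep (v n)) (rep (w n))) :=
              mul_le_mul h2 hi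
                (mul_nonneg hεpos.le (mul_nonneg hX.le hY.le)) (norm_nonneg _)
          _ = cdd (Pv n) (Pw n) * (cnr (Pv n) * cnr (Pw n)) := by rw [← hii, hiii]
          _ ≤ (cdd (Pv n) (Pw n) * ((nu n + nu (n+1))^2)) * (cnr (rep (v n)) * cnr (rep (w n))) := by
              have hc0 := cdd_nonneg (Pv n) (Pw n)
              have hmm := mul_le_mul hiv hiv' (cnr_nonneg _)
                (mul_nonneg (add_nonneg (hnupos n).le (hnupos (n+1)).le) hX.le)
              nlinarith [hmm, hc0, cnr_nonneg (Pv n), cnr_nonneg (Pw n)]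
      have hv6 : δ * (nu n * nu (n+1)) * ε ≤ cdd (Pv n) (Pw n) * ((nu n + nu (n+1))^2) :=
        le_of_mul_le_mul_right hv5 (mul_pos hX hY)
      have hv7 : nu n + nu (n+1) ≤ K * nu (n+1) := by
        have h10 : (c₁ * δ) * (nu n + nu (n+1)) ≤ (c₁*δ) * (K * nu (n+1)) := by
          have e : (c₁*δ) * (K * nu (n+1)) = nu (n+1) + (c₁*δ)*nu (n+1) := by
            rw [hKdef]
            field_simp
          rw [e]
          linarith [h5]
        exact le_of_mul_le_mul_left h10 (mul_pos hc₁ hδpos)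
      have hv8 : (nu n + nu (n+1))^2 ≤ K^2 * nu (n+1)^2 := by
        nlinarith [hv7, hnupos n, hnupos (n+1), hKpos,
          add_nonneg (hnupos n).le (hnupos (n+1)).le]
      have hv9 : δ * (nu n * nu (n+1)) * ε < σ' * (K^2 * nu (n+1)^2) := by
        have hcddnn := cdd_nonneg (Pv n) (Pw n)
        have j1 := mul_le_mul_of_nonneg_left hv8 hcddnn
        have j2 := mul_lt_mul_of_pos_right hdxy
          (mul_pos (pow_pos hKpos 2) (pow_pos (hnupos (n+1)) 2))
        linarith [hv6, j1, j2]
      have hfin : σ' * (K^2 * nu (n+1)^2) = σ * (δ*ε) * nu (n+1)^2 := by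
        rw [hσ'def]
        field_simp
      rw [hfin] at hv9
      have hfin2 : (δ*ε*nu (n+1)) * nu n < (δ*ε*nu (n+1)) * (σ * nu (n+1)) := by
        calc (δ*ε*nu (n+1)) * nu n = δ * (nu n * nu (n+1)) * ε := by ring
          _ < σ * (δ*ε) * nu (n+1)^2 := hv9
          _ = (δ*ε*nu (n+1)) * (σ * nu (n+1)) := by ring
      exact lt_of_mul_lt_mul_left hfin2 (mul_pos (mul_pos hδpos hεpos) (hnupos (n+1))).le
    have hsm2 := small_of_rat (fun _ => True)
      (fun σ hσ => (hshift _ (hrat2 σ hσ)).mono fun m hm _ => hm)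
    have hfreq0 : ∃ᶠ m in atTop, T (m+2) = (((0:ℂ)), 1) := by
      refine hfreq.mono ?_
      intro m hm
      have hB1 : B (m+1) ≠ 0 := fun hc => hBcons m hm.2 hc
      have hB2 : B (m+2) ≠ 0 := by
        rw [hBrec m, hm.2, mul_zero, add_zero]
        exact mul_ne_zero (hbne (m+1) (by omega)) hB1
      have hP2' : P (m+2) := (hP2 m).1 hm.1
      show (if B (m+2) = 0 then ((1:ℂ),0) else ((if Even (m+2) then f₁ else f₂), 1)) = _
      rw [if_neg hB2, hfpz (m+2) hP2']
    have h0 := pin0 0 (fun m => T (m+2) = (((0:ℂ)), 1)) hfreq0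
      (Eventually.of_forall fun m hm => hm)
      (fun σ hσ => (hsm2 σ hσ).mono fun m hm _ => hm trivial)
    rw [hf] at h0
    have hcontra : 0 < cdd ((((0:ℂ)),1) : ℂ × ℂ) (rep (some φ)) := by
      apply cdd_pos (by simp [Prod.ext_iff]) (rep_ne _)
      show (0:ℂ) * 1 - 1 * φ ≠ 0
      simpa using hφ
    rw [h0] at hcontra
    exact lt_irrefl _ hcontra

  -- junk parities force vanishing limits
  have hjunk_even : (∃ᶠ m in atTop, Even m ∧ B m = 0) → f₁ = 0 := by
    intro hfq
    have hf2' : ∃ᶠ nn in atTop, A (2*nn+2) / B (2*nn+2) = 0 := by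
      rw [frequently_atTop] at hfq ⊢
      intro N
      obtain ⟨m, hm, hev, hB0⟩ := hfq (2*N+2)
      obtain ⟨k, hk⟩ := hev
      refine ⟨k-1, by omega, ?_⟩
      have e : 2*(k-1)+2 = m := by omega
      rw [e, hB0, div_zero]
    exact tendsto_nhds_unique_of_frequently_eq hodd
      (tendsto_const_nhds : Tendsto (fun _ : ℕ => (0:ℂ)) atTop (nhds 0)) hf2'
  have hjunk_odd : (∃ᶠ m in atTop, ¬ Even m ∧ B m = 0) → f₂ = 0 := by
    intro hfq
    have hf2' : ∃ᶠ nn in atTop, A (2*nn+1) / B (2*nn+1) = 0 := by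
      rw [frequently_atTop] at hfq ⊢
      intro N
      obtain ⟨m, hm, hev, hB0⟩ := hfq (2*N+1)
      obtain ⟨k, hk⟩ := Nat.not_even_iff_odd.1 hev
      refine ⟨k, by omega, ?_⟩
      have e : 2*k+1 = m := by omega
      rw [e, hB0, div_zero]
    exact tendsto_nhds_unique_of_frequently_eq heven
      (tendsto_const_nhds : Tendsto (fun _ : ℕ => (0:ℂ)) atTop (nhds 0)) hf2'
  -- parity bookkeeping
  have hP2e : ∀ m, Even m ↔ Even (m+2) := fun m =>
    ⟨fun h => by obtain ⟨r, hr⟩ := h; exact ⟨r+1, by omega⟩,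
     fun h => by obtain ⟨r, hr⟩ := h; exact ⟨r-1, by omega⟩⟩
  by_cases hJ : ∃ᶠ m in atTop, B m = 0
  · have hsplit : (∃ᶠ m in atTop, Even m ∧ B m = 0) ∨ (∃ᶠ m in atTop, ¬Even m ∧ B m = 0) := by
      rw [← frequently_or_distrib]
      refine hJ.mono fun m hm => ?_
      by_cases h : Even m
      · exact Or.inl ⟨h, hm⟩
      · exact Or.inr ⟨h, hm⟩
    rcases hsplit with hE | hO
    · have hf1 : f₁ = 0 := hjunk_even hE
      have hf2 : f₂ ≠ 0 := fun hc => hne (hf1.trans hc.symm)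
      have hOfin : ∀ᶠ m in atTop, B m = 0 → Even m := by
        by_contra hcc
        rw [not_eventually] at hcc
        refine hf2 (hjunk_odd (hcc.mono fun m hm => ?_))
        push_neg at hm
        exact ⟨hm.2, hm.1⟩
      exact core (fun m => Even m) f₂ hf2 hP2e (fun m => Nat.even_add_one)
        (fun m hm => by rw [if_pos hm]; exact hf1)
        (fun m hm => by rw [if_neg hm]) hE hOfin
    · have hf2 : f₂ = 0 := hjunk_odd hO
      have hf1 : f₁ ≠ 0 := fun hc => hne (hc.trans hf2.symm)
      have hEfin : ∀ᶠ m in atTop, B m = 0 → ¬ Even m := by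
        by_contra hcc
        rw [not_eventually] at hcc
        refine hf1 (hjunk_even (hcc.mono fun m hm => ?_))
        push_neg at hm
        exact ⟨hm.2, hm.1⟩
      exact core (fun m => ¬ Even m) f₁ hf1 (fun m => not_congr (hP2e m))
        (fun m => not_congr Nat.even_add_one)
        (fun m hm => by rw [if_neg hm]; exact hf2)
        (fun m hm => by rw [if_pos (not_not.1 hm)]) hO hEfin
  · have hnoJ : ∀ᶠ m in atTop, B m ≠ 0 := by
      rw [not_frequently] at hJ
      exact hJ.mono fun m hm => hm
    have hratI : ∀ σ : ℝ, 0 < σ → ∀ᶠ m in atTop, nu (m+1) < σ * nu (m+2) := by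
      intro σ hσ
      have hσ4 : (0:ℝ) < σ * (c₁*δ) / 4 :=
        div_pos (mul_pos hσ (mul_pos hc₁ hδpos)) four_pos
      filter_upwards [hstar, hnoJ, hshift _ (hshift _ hnoJ), he (σ*(c₁*δ)/4) hσ4,
        hshift _ (hshift _ (he (σ*(c₁*δ)/4) hσ4))] with m h1 h2 h3 h4 h5
      have h6 := h1 h2 h3
      have h7 : em m + em (m+2) < σ * (c₁*δ) / 2 := by linarith
      have h8 := mul_lt_mul_of_pos_left h7 (hnupos (m+2))
      nlinarith [hnupos (m+1), hnupos (m+2), mul_pos hc₁ hδpos, hσ]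
    have hsmI := small_of_rat (fun _ => True)
      (fun σ hσ => (hratI σ hσ).mono fun m hm _ => hm)
    have hTI : ∀ᶠ m in atTop, T (m+2) = ((if Even (m+2) then f₁ else f₂), 1) := by
      filter_upwards [hshift _ (hshift _ hnoJ)] with m hm
      show (if B (m+2) = 0 then ((1:ℂ),0) else ((if Even (m+2) then f₁ else f₂), 1)) = _
      rw [if_neg hm]
    have hpin1 : f = some f₁ := by
      apply pin1 f₁
      apply pin0 f₁ (fun m => Even m)
      · exact frequently_atTop.2 fun N => ⟨2*N, by omega, ⟨N, by ring⟩⟩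
      · filter_upwards [hTI] with m hm hev
        rw [hm, if_pos ((hP2e m).1 hev)]
      · exact fun σ hσ => (hsmI σ hσ).mono fun m hm _ => hm trivial
    have hpin2 : f = some f₂ := by
      apply pin1 f₂
      apply pin0 f₂ (fun m => ¬ Even m)
      · refine frequently_atTop.2 fun N => ⟨2*N+1, by omega, ?_⟩
        intro h
        obtain ⟨r, hr⟩ := h
        omega
      · filter_upwards [hTI] with m hm hev
        rw [hm, if_neg fun hc => hev ((hP2e m).2 hc)]
      · exact fun σ hσ => (hsmI σ hσ).mono fun m hm _ => hm trivial
    rw [hpin1] at hpin2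
    exact hne (Option.some.inj hpin2)
end

section
/- Let B_n satisfy B_n = b_n B_{n-1} + a_n B_{n-2} with b_n, a_n ∈ ℂ, and suppose there exist constants c_1, c_2, c_3 > 0 with c_1 ≤ |b_i| ≤ c_2 and |a_{2i+1}/a_{2i}| ≤ c_3 for all i ≥ 1. Set r_n = B_n/B_{n-1} (assuming B_{n-1} ≠ 0 for all large n). Then it is impossible that simultaneously |r_{2n}| → ∞ and |r_{2n+1}| → 0 as n → ∞. -/
open Filter

/-- With `B_n = b_n B_{n-1} + a_n B_{n-2}`, `c₁ ≤ |b_i| ≤ c₂` and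
`|a_{2i+1}/a_{2i}| ≤ c₃`, setting `r_n = B_n/B_{n-1}`, it is impossible that
`|r_{2n}| → ∞` and `|r_{2n+1}| → 0` simultaneously. -/
theorem stmt15 (a b : ℕ → ℂ) (B : ℕ → ℂ)
    (hBrec : ∀ n : ℕ, B (n + 2) = b (n + 2) * B (n + 1) + a (n + 2) * B n)
    (hBne : ∃ N : ℕ, ∀ n : ℕ, N ≤ n → B n ≠ 0)
    (c₁ c₂ c₃ : ℝ) (hc₁ : 0 < c₁) (hc₂ : 0 < c₂) (hc₃ : 0 < c₃)
    (hb : ∀ i : ℕ, 1 ≤ i → c₁ ≤ ‖b i‖ ∧ ‖b i‖ ≤ c₂)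
    (hab : ∀ i : ℕ, 1 ≤ i → ‖a (2 * i + 1) / a (2 * i)‖ ≤ c₃) :
    ¬ (Tendsto (fun n => ‖B (2 * n) / B (2 * n - 1)‖) atTop atTop ∧
       Tendsto (fun n => ‖B (2 * n + 1) / B (2 * n)‖) atTop (nhds 0)) := by
  rintro ⟨h1, h2⟩
  set s : ℕ → ℝ := fun n => ‖B (2 * n) / B (2 * n - 1)‖ with hs
  set t : ℕ → ℝ := fun n => ‖B (2 * n + 1) / B (2 * n)‖ with ht
  obtain ⟨N, hN⟩ := hBne
  have htk : Tendsto (fun n => t (n - 1)) atTop (nhds 0) :=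
    h2.comp (tendsto_sub_atTop_nat 1)
  have hdiv : Tendsto (fun n => c₂ / s n) atTop (nhds 0) :=
    Tendsto.div_atTop tendsto_const_nhds h1
  have hf : Tendsto (fun n => t n + c₃ * t (n - 1) * (1 + c₂ / s n)) atTop (nhds 0) := by
    have := h2.add (((tendsto_const_nhds (x := c₃)).mul htk).mul
      ((tendsto_const_nhds (x := (1:ℝ))).add hdiv))
    simpa using this
  have hlt : ∀ᶠ n in atTop, t n + c₃ * t (n - 1) * (1 + c₂ / s n) < c₁ :=
    hf.eventually (gt_mem_nhds hc₁)
  have key : ∀ᶠ n in atTop, c₁ ≤ t n + c₃ * t (n - 1) * (1 + c₂ / s n) := by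
    filter_upwards [eventually_ge_atTop (N + 2), h1.eventually_ge_atTop (c₂ + 1)]
      with n hn hsn
    obtain ⟨k, rfl⟩ : ∃ k, n = k + 1 := ⟨n - 1, by omega⟩
    have e1 : 2 * (k + 1) = 2 * k + 2 := by ring
    have e2 : 2 * (k + 1) - 1 = 2 * k + 1 := by omega
    have e3 : 2 * (k + 1) + 1 = 2 * k + 3 := by omega
    have e4 : k + 1 - 1 = k := by omega
    have e7 : 2 * k + 2 - 1 = 2 * k + 1 := by omega
    simp only [hs, ht, e1, e2, e3, e4, e7] at hsn ⊢
    have hB0 : B (2 * k) ≠ 0 := hN _ (by omega)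
    have hB1 : B (2 * k + 1) ≠ 0 := hN _ (by omega)
    have hB2 : B (2 * k + 2) ≠ 0 := hN _ (by omega)
    set r1 : ℂ := B (2 * k + 1) / B (2 * k) with hr1
    set r2 : ℂ := B (2 * k + 2) / B (2 * k + 1) with hr2
    set r3 : ℂ := B (2 * k + 3) / B (2 * k + 2) with hr3
    have hr2pos : 0 < ‖r2‖ := lt_of_lt_of_le (by linarith) hsn
    -- algebraic identities
    have eq2 : a (2 * k + 2) = r1 * (r2 - b (2 * k + 2)) := by
      rw [hr1, hr2]
      field_simp
      linear_combination -hBrec (2 * k)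
    have eq3 : a (2 * k + 3) = r2 * (r3 - b (2 * k + 3)) := by
      rw [hr2, hr3]
      field_simp
      have := hBrec (2 * k + 1)
      linear_combination -this
    have hb2 := hb (2 * k + 2) (by omega)
    have hb3 := hb (2 * k + 3) (by omega)
    -- a (2k+2) ≠ 0
    have hsub : r2 - b (2 * k + 2) ≠ 0 := by
      intro h
      have : r2 = b (2 * k + 2) := sub_eq_zero.mp h
      rw [this] at hsn
      linarith [hb2.2]
    have hane : a (2 * k + 2) ≠ 0 := by
      rw [eq2]
      exact mul_ne_zero (div_ne_zero hB1 hB0) hsub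
    have habk := hab (k + 1) (by omega)
    have e5 : 2 * (k + 1) + 1 = 2 * k + 3 := by omega
    have e6 : 2 * (k + 1) = 2 * k + 2 := by omega
    rw [e5, e6, norm_div, div_le_iff₀ (norm_pos_iff.mpr hane)] at habk
    -- key inequality: |r2| * (c₁ - |r3|) ≤ c₃ * (|r1| * (|r2| + c₂))
    have step1 : c₁ - ‖r3‖ ≤ ‖r3 - b (2 * k + 3)‖ := by
      have h := norm_sub_norm_le (b (2 * k + 3)) r3
      rw [norm_sub_rev] at h
      linarith [hb3.1]
    have step2 : ‖r2‖ * (c₁ - ‖r3‖) ≤ ‖a (2 * k + 3)‖ := by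
      rw [eq3, norm_mul]
      exact mul_le_mul_of_nonneg_left step1 (norm_nonneg _)
    have step3 : ‖a (2 * k + 2)‖ ≤ ‖r1‖ * (‖r2‖ + c₂) := by
      rw [eq2, norm_mul]
      refine mul_le_mul_of_nonneg_left ?_ (norm_nonneg _)
      have h : ‖r2 - b (2 * k + 2)‖ ≤
          ‖r2‖ + ‖b (2 * k + 2)‖ := by
        simpa using norm_sub_le r2 (b (2 * k + 2))
      linarith [hb2.2]
    have main : ‖r2‖ * (c₁ - ‖r3‖) ≤
        c₃ * (‖r1‖ * (‖r2‖ + c₂)) := by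
      calc ‖r2‖ * (c₁ - ‖r3‖) ≤ ‖a (2 * k + 3)‖ := step2
        _ ≤ c₃ * ‖a (2 * k + 2)‖ := habk
        _ ≤ c₃ * (‖r1‖ * (‖r2‖ + c₂)) := by
            exact mul_le_mul_of_nonneg_left step3 (le_of_lt hc₃)
    have hdivle : c₁ - ‖r3‖ ≤ c₃ * ‖r1‖ * (1 + c₂ / ‖r2‖) := by
      rw [← sub_nonneg] at main ⊢
      have h := div_nonneg main (le_of_lt hr2pos)
      have heq : (c₃ * (‖r1‖ * (‖r2‖ + c₂)) -
          ‖r2‖ * (c₁ - ‖r3‖)) / ‖r2‖ =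
          c₃ * ‖r1‖ * (1 + c₂ / ‖r2‖) - (c₁ - ‖r3‖) := by
        field_simp
      rwa [heq] at h
    linarith
  obtain ⟨n, h1', h2'⟩ := (key.and hlt).exists
  linarith
end

section
/- Let x be a primitive m-th root of unity with 5 | m, and let P_n(x), Q_n(x) be the numerator and denominator convergents of the continued fraction 1 + x/(1 + x²/(1 + x³/(1+...))). Given Schur's identities P_{qm+r} = P_r · P_{m-1}^q and Q_{qm+r} = Q_r · Q_{m-2}^q for 0 ≤ r < m, with P_{m-1} = -x^{2m/5} - x^{-2m/5} and Q_{m-2} = -x^{m/5} - x^{-m/5}, the continued fraction converges generally: to 0 if |P_{m-1}/Q_{m-2}| < 1, and to ∞ if |P_{m-1}/Q_{m-2}| > 1. -/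
open Filter

private lemma root5_ne (z : ℂ) (hz5 : z ^ 5 = 1) (hz1 : z ≠ 1) : -z - z⁻¹ ≠ 0 := by
  have hz0 : z ≠ 0 := by rintro rfl; simp at hz5
  intro h
  have hinv : z⁻¹ = -z := by linear_combination -h
  have hmul := mul_inv_cancel₀ hz0
  rw [hinv] at hmul
  have h2 : z ^ 2 = -1 := by linear_combination -hmul
  apply hz1
  have h5 : z ^ 5 = z := by
    rw [show z ^ 5 = (z ^ 2) ^ 2 * z by ring, h2]; ring
  rw [hz5] at h5
  exact h5.symm

/-- For `x` a primitive `m`-th root of unity with `5 ∣ m`, given Schur's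
identities, the Rogers–Ramanujan continued fraction converges generally:
to `0` when `|P_{m-1}/Q_{m-2}| < 1` and to `∞` when `|P_{m-1}/Q_{m-2}| > 1`. -/
theorem stmt16 (m : ℕ) (hm : 0 < m) (h5 : 5 ∣ m) (x : ℂ)
    (hprim : IsPrimitiveRoot x m) (P Q : ℕ → ℂ)
    (hP0 : P 0 = 1) (hP1 : P 1 = 1 + x) (hQ0 : Q 0 = 1) (hQ1 : Q 1 = 1)
    (hPrec : ∀ n : ℕ, P (n + 2) = P (n + 1) + x ^ (n + 2) * P n)
    (hQrec : ∀ n : ℕ, Q (n + 2) = Q (n + 1) + x ^ (n + 2) * Q n)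
    (hPschur : ∀ q r : ℕ, r < m → P (q * m + r) = P r * P (m - 1) ^ q)
    (hQschur : ∀ q r : ℕ, r < m → Q (q * m + r) = Q r * Q (m - 2) ^ q)
    (hPm : P (m - 1) = -(x ^ (2 * (m / 5))) - (x ^ (2 * (m / 5)))⁻¹)
    (hQm : Q (m - 2) = -(x ^ (m / 5)) - (x ^ (m / 5))⁻¹) :
    (‖P (m - 1) / Q (m - 2)‖ < 1 → GenConvTo P Q (some 0)) ∧
    (1 < ‖P (m - 1) / Q (m - 2)‖ → GenConvTo P Q none) := by
  classical
  have hm5 : 5 * (m / 5) = m := Nat.mul_div_cancel' h5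
  have hk0 : 0 < m / 5 := by omega
  have hxm : x ^ m = 1 := hprim.pow_eq_one
  have hx0 : x ≠ 0 := by
    intro h; rw [h, zero_pow hm.ne'] at hxm; exact zero_ne_one hxm
  have hdvd : ∀ l, x ^ l = 1 → m ∣ l := fun l hl => hprim.dvd_of_pow_eq_one l hl
  -- nonvanishing of the Schur values
  have hPm1_ne : P (m - 1) ≠ 0 := by
    rw [hPm]
    apply root5_ne
    · rw [← pow_mul, (show 2 * (m / 5) * 5 = m * 2 by omega), pow_mul, hxm, one_pow]
    · intro h
      have h1 := hdvd _ h
      have h2 := Nat.le_of_dvd (by omega) h1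
      omega
  have hQm2_ne : Q (m - 2) ≠ 0 := by
    rw [hQm]
    apply root5_ne
    · rw [← pow_mul, (show m / 5 * 5 = m by omega), hxm]
    · intro h
      have h1 := hdvd _ h
      have h2 := Nat.le_of_dvd (by omega) h1
      omega
  -- determinant identity
  have hdet : ∀ n, P (n + 1) * Q n - P n * Q (n + 1) ≠ 0 := by
    intro n
    induction n with
    | zero =>
        rw [hP0, hP1, hQ0, hQ1]
        simpa using hx0
    | succ k ih =>
        have e : P (k + 2) * Q (k + 1) - P (k + 1) * Q (k + 2)
            = -x ^ (k + 2) * (P (k + 1) * Q k - P k * Q (k + 1)) := by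
          rw [hPrec k, hQrec k]; ring
        rw [e]
        exact mul_ne_zero (neg_ne_zero.2 (pow_ne_zero _ hx0)) ih
  have hPpair : ∀ n, ¬(P n = 0 ∧ P (n + 1) = 0) := by
    rintro n ⟨h1, h2⟩
    exact hdet n (by rw [h1, h2]; ring)
  have hQpair : ∀ n, ¬(Q n = 0 ∧ Q (n + 1) = 0) := by
    rintro n ⟨h1, h2⟩
    exact hdet n (by rw [h1, h2]; ring)
  -- Schur identities in mod/div form
  have hPm_eq : P m = P (m - 1) := by
    have h1 := hPschur 1 0 hm
    simpa [hP0] using h1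
  have hPn : ∀ n, P n = P (n % m) * P (m - 1) ^ (n / m) := by
    intro n
    have h := Nat.div_add_mod' n m
    have e : n = n / m * m + n % m := by omega
    conv_lhs => rw [e]
    exact hPschur _ _ (Nat.mod_lt _ hm)
  have hQn : ∀ n, Q n = Q (n % m) * Q (m - 2) ^ (n / m) := by
    intro n
    have h := Nat.div_add_mod' n m
    have e : n = n / m * m + n % m := by omega
    conv_lhs => rw [e]
    exact hQschur _ _ (Nat.mod_lt _ hm)
  have hPn1 : ∀ n, P (n + 1) = P (n % m + 1) * P (m - 1) ^ (n / m) := by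
    intro n
    have h := Nat.div_add_mod' n m
    have hrlt : n % m < m := Nat.mod_lt _ hm
    rcases lt_or_ge (n % m + 1) m with hlt | hge
    · have e : n + 1 = n / m * m + (n % m + 1) := by omega
      rw [e]
      exact hPschur _ _ hlt
    · have hrm : n % m + 1 = m := by omega
      have e : n + 1 = (n / m + 1) * m + 0 := by
        have h2 : (n / m + 1) * m = n / m * m + m := by ring
        omega
      rw [e, hPschur _ _ hm, hP0, hrm, hPm_eq, one_mul, pow_succ]
      ring
  have hQm_eq : Q m = Q (m - 2) := by
    have h1 := hQschur 1 0 hm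
    simpa [hQ0] using h1
  have hQn1 : ∀ n, Q (n + 1) = Q (n % m + 1) * Q (m - 2) ^ (n / m) := by
    intro n
    have h := Nat.div_add_mod' n m
    have hrlt : n % m < m := Nat.mod_lt _ hm
    rcases lt_or_ge (n % m + 1) m with hlt | hge
    · have e : n + 1 = n / m * m + (n % m + 1) := by omega
      rw [e]
      exact hQschur _ _ hlt
    · have hrm : n % m + 1 = m := by omega
      have e : n + 1 = (n / m + 1) * m + 0 := by
        have h2 : (n / m + 1) * m = n / m * m + m := by ring
        omega
      rw [e, hQschur _ _ hm, hQ0, hrm, hQm_eq, one_mul, pow_succ]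
      ring
  -- bad set of parameters
  set B : Finset ℂ := ((Finset.range m).image fun r => -(P (r + 1) / P r)) ∪
      ((Finset.range m).image fun r => -(Q (r + 1) / Q r)) with hB
  have hfacP : ∀ c : ℂ, c ∉ B → ∀ r, r < m → P (r + 1) + c * P r ≠ 0 := by
    intro c hc r hr h
    by_cases hp : P r = 0
    · exact hPpair r ⟨hp, by simpa [hp] using h⟩
    · apply hc
      rw [hB]
      apply Finset.mem_union_left
      refine Finset.mem_image.2 ⟨r, Finset.mem_range.2 hr, ?_⟩
      field_simp
      linear_combination -h
  have hfacQ : ∀ c : ℂ, c ∉ B → ∀ r, r < m → Q (r + 1) + c * Q r ≠ 0 := by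
    intro c hc r hr h
    by_cases hp : Q r = 0
    · exact hQpair r ⟨hp, by simpa [hp] using h⟩
    · apply hc
      rw [hB]
      apply Finset.mem_union_right
      refine Finset.mem_image.2 ⟨r, Finset.mem_range.2 hr, ?_⟩
      field_simp
      linear_combination -h
  obtain ⟨c₁, hc₁⟩ := Infinite.exists_notMem_finset B
  obtain ⟨c₂, hc₂'⟩ := Infinite.exists_notMem_finset (insert c₁ B)
  have hc₂ : c₂ ∉ B := fun h => hc₂' (Finset.mem_insert_of_mem h)
  have hne : c₁ ≠ c₂ := fun h => hc₂' (h ▸ Finset.mem_insert_self c₁ B)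
  -- formula for Sval
  have hS : ∀ c : ℂ, ∀ n : ℕ, Sval (P (n + 1)) (Q (n + 1)) (P n) (Q n) (some c)
      = ((P (n % m + 1) + c * P (n % m)) / (Q (n % m + 1) + c * Q (n % m)))
        * (P (m - 1) / Q (m - 2)) ^ (n / m) := by
    intro c n
    show (P (n + 1) + c * P n) / (Q (n + 1) + c * Q n) = _
    rw [hPn1 n, hPn n, hQn1 n, hQn n, div_pow, ← mul_div_mul_comm]
    congr 1 <;> ring
  -- uniform bounds for the residue factors
  have hbound : ∀ c : ℂ, c ∉ B → ∃ Cmax Cmin : ℝ, 0 < Cmin ∧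
      ∀ n : ℕ,
        Cmin ≤ ‖(P (n % m + 1) + c * P (n % m)) / (Q (n % m + 1) + c * Q (n % m))‖ ∧
        ‖(P (n % m + 1) + c * P (n % m)) / (Q (n % m + 1) + c * Q (n % m))‖ ≤ Cmax := by
    intro c hc
    set T := (Finset.range m).image
        (fun r => ‖(P (r + 1) + c * P r) / (Q (r + 1) + c * Q r)‖) with hT
    have hTne : T.Nonempty := ⟨_, Finset.mem_image.2 ⟨0, Finset.mem_range.2 hm, rfl⟩⟩
    refine ⟨T.max' hTne, T.min' hTne, ?_, ?_⟩
    · obtain ⟨r, hr, hre⟩ := Finset.mem_image.1 (T.min'_mem hTne)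
      rw [← hre]
      exact norm_pos_iff.2 (div_ne_zero (hfacP c hc r (Finset.mem_range.1 hr))
        (hfacQ c hc r (Finset.mem_range.1 hr)))
    · intro n
      have hmem : ‖(P (n % m + 1) + c * P (n % m)) / (Q (n % m + 1) + c * Q (n % m))‖ ∈ T :=
        Finset.mem_image.2 ⟨n % m, Finset.mem_range.2 (Nat.mod_lt _ hm), rfl⟩
      exact ⟨T.min'_le _ hmem, T.le_max' _ hmem⟩
  have hdivlim : Tendsto (fun n : ℕ => n / m) atTop atTop := by
    apply tendsto_atTop_atTop.2
    intro b
    exact ⟨b * m, fun n hn => (Nat.le_div_iff_mul_le hm).2 hn⟩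
  -- the two limit results
  have hzero : ∀ c ∉ B, ‖P (m - 1) / Q (m - 2)‖ < 1 →
      Tendsto (fun n => Sval (P (n + 1)) (Q (n + 1)) (P n) (Q n) (some c)) atTop (nhds 0) := by
    intro c hc hlt
    obtain ⟨Cmax, Cmin, hCmin, hb⟩ := hbound c hc
    rw [tendsto_congr (hS c), tendsto_zero_iff_norm_tendsto_zero]
    apply squeeze_zero (g := fun n => Cmax * (‖P (m - 1) / Q (m - 2)‖) ^ (n / m))
      (fun n => norm_nonneg _)
    · intro n
      rw [norm_mul, norm_pow]
      exact mul_le_mul_of_nonneg_right (hb n).2 (pow_nonneg (norm_nonneg _) _)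
    · have h1 : Tendsto (fun q : ℕ => (‖P (m - 1) / Q (m - 2)‖) ^ q) atTop (nhds 0) :=
        tendsto_pow_atTop_nhds_zero_of_lt_one (norm_nonneg _) hlt
      simpa using (h1.comp hdivlim).const_mul Cmax
  have hinf : ∀ c ∉ B, 1 < ‖P (m - 1) / Q (m - 2)‖ →
      Tendsto (fun n => ‖Sval (P (n + 1)) (Q (n + 1)) (P n) (Q n) (some c)‖)
        atTop atTop := by
    intro c hc hgt
    obtain ⟨Cmax, Cmin, hCmin, hb⟩ := hbound c hc
    have h1 : Tendsto (fun n : ℕ => Cmin * (‖P (m - 1) / Q (m - 2)‖) ^ (n / m))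
        atTop atTop :=
      ((tendsto_pow_atTop_atTop_of_one_lt hgt).comp hdivlim).const_mul_atTop hCmin
    apply tendsto_atTop_mono _ h1
    intro n
    rw [hS c n, norm_mul, norm_pow]
    exact mul_le_mul_of_nonneg_right (hb n).1 (pow_nonneg (norm_nonneg _) _)
  -- positivity of the chordal distance
  have hlim : 0 < Filter.liminf (fun _ : ℕ => sph (some c₁) (some c₂)) atTop := by
    rw [Filter.liminf_const]
    simp only [sph]
    apply div_pos
    · exact norm_pos_iff.2 (sub_ne_zero.2 hne.symm)
    · exact mul_pos (Real.sqrt_pos.2 (by positivity)) (Real.sqrt_pos.2 (by positivity))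
  constructor
  · intro hlt
    exact ⟨fun _ => some c₁, fun _ => some c₂, hlim, hzero c₁ hc₁ hlt, hzero c₂ hc₂ hlt⟩
  · intro hgt
    exact ⟨fun _ => some c₁, fun _ => some c₂, hlim, hinf c₁ hc₁ hgt, hinf c₂ hc₂ hgt⟩
end
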